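/- arXiv:2006.05001 — 4 statements merged into one kernel-verified Lean document; each statement's English description precedes it below -/
import Mathlib

section
/- Let n_0 ≥ 1, L ≥ 1, and layer widths n_1,...,n_L with n_l ≥ n_0 for all l. There exists an L-layer ReLU feedforward network with input dimension n_0, hidden widths n_1,...,n_L, and scalar output whose number of linear regions is at least (∏_{l=1}^{L-1} ⌊n_l/n_0⌋^{n_0}) · ∑_{j=0}^{n_0} C(n_L, j), where ⌊·⌋ is the floor function and C(n,j) is the binomial coefficient. -/
open Matrix Polynomial

/-- Hidden-layer outputs of a ReLU feedforward network: `h_0 = x`,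
`h_{l+1} = max(W_{l+1} h_l + b_{l+1}, 0)` componentwise. -/
noncomputable def reluHidden (n : ℕ → ℕ)
    (W : (l : ℕ) → Matrix (Fin (n (l + 1))) (Fin (n l)) ℝ)
    (b : (l : ℕ) → Fin (n (l + 1)) → ℝ)
    (x : Fin (n 0) → ℝ) : (l : ℕ) → Fin (n l) → ℝ
  | 0 => x
  | l + 1 => fun j => max (((W l).mulVec (reluHidden n W b x l) + b l) j) 0

/-- Activation pattern at input `x`: which hidden units (over the `L` hidden layers)
have strictly positive pre-activation. -/
def reluPattern (n : ℕ → ℕ)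
    (W : (l : ℕ) → Matrix (Fin (n (l + 1))) (Fin (n l)) ℝ)
    (b : (l : ℕ) → Fin (n (l + 1)) → ℝ)
    (L : ℕ) (x : Fin (n 0) → ℝ) : (l : Fin L) → Fin (n (l.1 + 1)) → Prop :=
  fun l j => 0 < ((W l.1).mulVec (reluHidden n W b x l.1) + b l.1) j

/-- The linear regions of a ReLU network: the maximal connected subsets of the input space on
which the activation pattern is constant, i.e. the connected components (within the level sets
of the activation-pattern map) of points of the input space. -/
def linearRegions (n : ℕ → ℕ)
    (W : (l : ℕ) → Matrix (Fin (n (l + 1))) (Fin (n l)) ℝ)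
    (b : (l : ℕ) → Fin (n (l + 1)) → ℝ)
    (L : ℕ) : Set (Set (Fin (n 0) → ℝ)) :=
  {R | ∃ x, R = connectedComponentIn
      {y | reluPattern n W b L y = reluPattern n W b L x} x}

noncomputable def finv (P : ℕ) (j : ℕ) (t : ℝ) : ℝ :=
  if j % 2 = 0 then ((j : ℝ) + t) / P else ((j : ℝ) + 1 - t) / P

noncomputable def chain (p : ℕ → ℕ) (L : ℕ) (cells : ℕ → ℕ → ℕ) (y : ℕ → ℝ) : ℕ → ℕ → ℝ
  | 0 => y
  | (k + 1) => fun i => finv (p (L - 1 - k)) (cells (L - 1 - k) i) (chain p L cells y k i)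

lemma finv_mem (P j : ℕ) (t : ℝ) (hP : 1 ≤ P) (hj : j < P) (ht : 0 < t ∧ t < 1) :
    0 < finv P j t ∧ finv P j t < 1 := by
  have hPr : (0:ℝ) < (P:ℕ) := by exact_mod_cast hP
  have hjr : (j:ℝ) + 1 ≤ (P:ℝ) := by exact_mod_cast hj
  have hj0 : (0:ℝ) ≤ (j:ℝ) := Nat.cast_nonneg j
  unfold finv
  split
  · constructor
    · apply div_pos (by linarith [ht.1]) hPr
    · rw [div_lt_one hPr]; linarith [ht.2]
  · constructor
    · apply div_pos (by linarith [ht.2]) hPr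
    · rw [div_lt_one hPr]; linarith [ht.1]

lemma finv_eq (P j : ℕ) (t : ℝ) (hP : 1 ≤ P) :
    ((P:ℕ):ℝ) * finv P j t = if j % 2 = 0 then (j:ℝ) + t else (j:ℝ) + 1 - t := by
  have hPr : ((P:ℕ):ℝ) ≠ 0 := by positivity
  unfold finv
  split <;> rw [mul_div_cancel₀ _ hPr]


lemma multiset_prod_neg_iff (s : Multiset ℝ) (h : ∀ x ∈ s, x ≠ 0) :
    (s.prod < 0 ↔ Odd (s.countP (· < 0))) := by
  induction s using Multiset.induction_on with
  | empty => simp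
  | cons a s ih =>
    have ha : a ≠ 0 := h a (Multiset.mem_cons_self a s)
    have hs : ∀ x ∈ s, x ≠ 0 := fun x hx => h x (Multiset.mem_cons_of_mem hx)
    have hprod : s.prod ≠ 0 := Multiset.prod_ne_zero (fun h0 => hs 0 h0 rfl)
    rw [Multiset.prod_cons, Multiset.countP_cons]
    rcases lt_or_gt_of_ne ha with ha' | ha'
    · simp only [if_pos ha']
      rw [Nat.odd_add_one, ← ih hs]
      constructor
      · intro h1 h2
        nlinarith
      · intro h1
        rcases lt_or_gt_of_ne hprod with h2 | h2
        · exact absurd h2 h1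
        · nlinarith
    · simp only [if_neg (not_lt.2 ha'.le), add_zero, ← ih hs]
      constructor
      · intro h1
        by_contra h2
        push_neg at h2
        rcases lt_or_gt_of_ne hprod with h3 | h3
        · exact absurd h3 (not_lt.2 h2)
        · nlinarith
      · intro h1; nlinarith


lemma countP_replicate (p : ℝ → Prop) [DecidablePred p] (k : ℕ) (x : ℝ) :
    (Multiset.replicate k x).countP p = if p x then k else 0 := by
  induction k with
  | zero => simp
  | succ k ih =>
    rw [Multiset.replicate_succ, Multiset.countP_cons, ih]
    split <;> simp


lemma card_small_subsets (m e : ℕ) :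
    Fintype.card {C : Finset (Fin m) // C.card ≤ e} = ∑ k ∈ Finset.range (e + 1), m.choose k := by
  rw [Fintype.card_subtype]
  have : (Finset.univ.filter fun C : Finset (Fin m) => C.card ≤ e) =
      (Finset.range (e + 1)).biUnion (fun k => Finset.powersetCard k Finset.univ) := by
    ext C
    simp [Finset.mem_powersetCard, Nat.lt_succ_iff]
  rw [this, Finset.card_biUnion]
  · apply Finset.sum_congr rfl
    intro k _
    rw [Finset.card_powersetCard]
    simp
  · intro i _ j _ hij
    apply Finset.disjoint_left.2
    intro C hC hC'
    simp [Finset.mem_powersetCard] at hC hC'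
    omega

lemma pascal_sum (m d : ℕ) :
    ∑ j ∈ Finset.range (d + 1), (m + 1).choose j =
      ∑ j ∈ Finset.range (d + 1), m.choose j + ∑ j ∈ Finset.range d, m.choose j := by
  induction d with
  | zero => simp
  | succ d ih =>
    rw [Finset.sum_range_succ, ih, Nat.choose_succ_succ,
      Finset.sum_range_succ (f := fun j => m.choose j) (n := d + 1),
      Finset.sum_range_succ (f := fun j => m.choose j) (n := d)]
    ring

lemma arrangement_exists (d M : ℕ) (hd : 1 ≤ d) (hM : 1 ≤ M) :
    ∃ (A : ℕ → ℕ → ℝ) (B : ℕ → ℝ) (T : Type) (_ : Fintype T) (pt : T → ℕ → ℝ),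
      Fintype.card T = ∑ j ∈ Finset.range (d + 1), M.choose j ∧
      (∀ t i, 0 < pt t i ∧ pt t i < 1) ∧
      (∀ t t' : T,
        (∀ m, m < M → ((0 : ℝ) < (∑ i ∈ Finset.range d, A m i * pt t i) + B m ↔
                   (0 : ℝ) < (∑ i ∈ Finset.range d, A m i * pt t' i) + B m)) → t = t') := by
  classical
  set G := Fin (M - 1)
  set T : Type := {C : Finset G // C.card ≤ d} ⊕ {C : Finset G // C.card ≤ d - 1} with hT
  let Cset : T → Finset G := Sum.elim Subtype.val Subtype.val
  let e : T → ℕ := Sum.elim (fun _ => 0) (fun _ => 1)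
  have hCe : ∀ t : T, (Cset t).card + e t ≤ d := by
    rintro (⟨C, hC⟩ | ⟨C, hC⟩) <;> simp [Cset, e] <;> omega
  have he1 : ∀ t : T, e t ≤ 1 := by rintro (t | t) <;> simp [e]
  let roots : T → Multiset ℝ := fun t =>
    (Cset t).val.map (fun c : G => ((c : ℕ) : ℝ) + 2⁻¹) +
      (Multiset.replicate (e t) ((M : ℕ) : ℝ) +
        Multiset.replicate (d - (Cset t).card - e t) (-1 : ℝ))
  let q : T → ℝ[X] := fun t => -(((roots t).map fun r => X - C r).prod)
  have hroots_card : ∀ t, Multiset.card (roots t) = d := by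
    intro t
    have := hCe t
    rw [show roots t = (Cset t).val.map (fun c : G => ((c : ℕ) : ℝ) + 2⁻¹) +
      (Multiset.replicate (e t) ((M : ℕ) : ℝ) +
        Multiset.replicate (d - (Cset t).card - e t) (-1 : ℝ)) from rfl]
    rw [Multiset.card_add, Multiset.card_add, Multiset.card_map,
      Multiset.card_replicate, Multiset.card_replicate]
    have hc : Multiset.card (Cset t).val = (Cset t).card := rfl
    omega
  have hmonic : ∀ t, (((roots t).map fun r => X - C r).prod).Monic := fun t =>
    monic_multiset_prod_of_monic _ _ (fun r _ => monic_X_sub_C r)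
  have hdeg : ∀ t, (((roots t).map fun r => X - C r).prod).natDegree = d := by
    intro t
    rw [natDegree_multiset_prod_X_sub_C_eq_card, hroots_card]
  have hqdeg : ∀ t, (q t).natDegree = d := by
    intro t; rw [natDegree_neg]; exact hdeg t
  have hqcoeffd : ∀ t, (q t).coeff d = -1 := by
    intro t
    rw [coeff_neg, neg_eq_iff_eq_neg, neg_neg, ← hdeg t]
    exact (hmonic t).coeff_natDegree
  -- counting function
  let cnt : T → ℕ → ℕ := fun t m => ((Cset t).filter (fun c : G => m ≤ (c : ℕ))).card + e t
  -- sign of eval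
  have hsign : ∀ t : T, ∀ m : ℕ, m < M →
      ((0 : ℝ) < (q t).eval (m : ℝ) ↔ Odd (cnt t m)) := by
    intro t m hm
    have heval : (q t).eval (m : ℝ) = -(((roots t).map (fun r => (m : ℝ) - r)).prod) := by
      simp only [q, eval_neg, eval_multiset_prod, Multiset.map_map, Function.comp_def,
        eval_sub, eval_X, eval_C]
    rw [heval, neg_pos]
    have hnz : ∀ x ∈ (roots t).map (fun r => (m : ℝ) - r), x ≠ 0 := by
      intro x hx
      obtain ⟨r, hr, rfl⟩ := Multiset.mem_map.1 hx
      simp only [roots, Multiset.mem_add, Multiset.mem_map, Multiset.mem_replicate] at hr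
      rcases hr with ⟨c, _, rfl⟩ | ⟨_, rfl⟩ | ⟨_, rfl⟩
      · rcases le_or_gt m (c : ℕ) with h | h
        · have : (m : ℝ) ≤ (c : ℕ) := by exact_mod_cast h
          intro h0; nlinarith
        · have : ((c : ℕ) : ℝ) + 1 ≤ (m : ℝ) := by exact_mod_cast h
          intro h0; nlinarith
      · have : (m : ℝ) < (M : ℝ) := by exact_mod_cast hm
        intro h0; nlinarith
      · intro h0
        have : (0 : ℝ) ≤ (m : ℝ) := Nat.cast_nonneg m
        nlinarith
    rw [multiset_prod_neg_iff _ hnz]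
    have key : Multiset.countP (· < (0:ℝ)) ((roots t).map (fun r => (m : ℝ) - r)) = cnt t m := by
      rw [Multiset.countP_map]
      rw [show roots t = (Cset t).val.map (fun c : G => ((c : ℕ) : ℝ) + 2⁻¹) +
        (Multiset.replicate (e t) ((M : ℕ) : ℝ) +
          Multiset.replicate (d - (Cset t).card - e t) (-1 : ℝ)) from rfl]
      rw [Multiset.filter_add, Multiset.filter_add, Multiset.card_add, Multiset.card_add]
      have h1 : Multiset.card (Multiset.filter (fun a => (m : ℝ) - a < 0)
          ((Cset t).val.map (fun c : G => ((c : ℕ) : ℝ) + 2⁻¹))) =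
          ((Cset t).filter (fun c : G => m ≤ (c : ℕ))).card := by
        rw [← Multiset.countP_eq_card_filter, Multiset.countP_map]
        have : ((Cset t).filter (fun c : G => m ≤ (c : ℕ))).val =
            (Cset t).val.filter (fun c : G => m ≤ (c : ℕ)) := Finset.filter_val _ _
        rw [Finset.card_def, this]
        congr 1
        apply Multiset.filter_congr
        intro c _
        constructor
        · intro h
          by_contra hc
          push_neg at hc
          have : ((c : ℕ) : ℝ) + 1 ≤ (m : ℝ) := by exact_mod_cast hc
          nlinarith
        · intro h
          have : (m : ℝ) ≤ ((c : ℕ) : ℝ) := by exact_mod_cast h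
          nlinarith
      have h2 : Multiset.card (Multiset.filter (fun a => (m : ℝ) - a < 0)
          (Multiset.replicate (e t) ((M : ℕ) : ℝ))) = e t := by
        rw [← Multiset.countP_eq_card_filter, countP_replicate]
        rw [if_pos]
        have : (m : ℝ) < (M : ℝ) := by exact_mod_cast hm
        linarith
      have h3 : Multiset.card (Multiset.filter (fun a => (m : ℝ) - a < 0)
          (Multiset.replicate (d - (Cset t).card - e t) (-1 : ℝ))) = 0 := by
        rw [← Multiset.countP_eq_card_filter, countP_replicate]
        rw [if_neg]
        have : (0 : ℝ) ≤ (m : ℝ) := Nat.cast_nonneg m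
        intro h
        nlinarith
      rw [h1, h2, h3]
      simp [cnt]
    rw [key]
  -- coefficient points
  let pt0 : T → ℕ → ℝ := fun t i => (q t).coeff i
  have hf : ∀ (t : T) (m : ℕ),
      (∑ i ∈ Finset.range d, (m:ℝ)^i * pt0 t i) - (m:ℝ)^d = (q t).eval (m:ℝ) := by
    intro t m
    rw [eval_eq_sum_range' (n := d + 1) (by rw [hqdeg]; omega), Finset.sum_range_succ, hqcoeffd]
    rw [Finset.sum_congr rfl (fun i _ => mul_comm ((q t).coeff i) ((m:ℝ)^i))]
    ring
  let S : ℝ := ∑ t : T, ∑ i ∈ Finset.range d, |pt0 t i|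
  have hS : 0 ≤ S := Finset.sum_nonneg (fun t _ => Finset.sum_nonneg (fun i _ => abs_nonneg _))
  set R : ℝ := 2 + S with hRdef
  have hR : 0 < R := by simp only [hRdef]; linarith
  have habs : ∀ t i, |pt0 t i| < R := by
    intro t i
    by_cases hi : i < d
    · have h1 : |pt0 t i| ≤ ∑ i ∈ Finset.range d, |pt0 t i| :=
        Finset.single_le_sum (f := fun i => |pt0 t i|) (fun _ _ => abs_nonneg _)
          (Finset.mem_range.2 hi)
      have h2 : (∑ i ∈ Finset.range d, |pt0 t i|) ≤ S :=
        Finset.single_le_sum (f := fun t => ∑ i ∈ Finset.range d, |pt0 t i|)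
          (fun _ _ => Finset.sum_nonneg (fun _ _ => abs_nonneg _)) (Finset.mem_univ t)
      simp only [hRdef]; linarith
    · by_cases hi2 : i = d
      · subst hi2
        have hval : pt0 t i = -1 := hqcoeffd t
        rw [hval]
        simp only [hRdef]
        rw [abs_neg, abs_one]
        linarith
      · have hval : pt0 t i = 0 := coeff_eq_zero_of_natDegree_lt (by rw [hqdeg]; omega)
        rw [hval, abs_zero]; linarith
  let pt : T → ℕ → ℝ := fun t i => (pt0 t i + R) / (2 * R)
  have hpt : ∀ t i, 0 < pt t i ∧ pt t i < 1 := by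
    intro t i
    have h := abs_lt.1 (habs t i)
    constructor
    · exact div_pos (by linarith [h.1]) (by linarith)
    · rw [div_lt_one (by linarith)]; linarith [h.2]
  let A : ℕ → ℕ → ℝ := fun m i => 2 * R * ((m:ℝ)^i)
  let B : ℕ → ℝ := fun m => (-(m:ℝ)^d) - R * ∑ i ∈ Finset.range d, (m:ℝ)^i
  have hAB : ∀ (t : T) (m : ℕ),
      (∑ i ∈ Finset.range d, A m i * pt t i) + B m = (q t).eval (m:ℝ) := by
    intro t m
    have hterm : ∀ i ∈ Finset.range d,
        A m i * pt t i = (m:ℝ)^i * pt0 t i + R * (m:ℝ)^i := by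
      intro i _
      simp only [A, pt]
      field_simp
    rw [Finset.sum_congr rfl hterm, Finset.sum_add_distrib, ← Finset.mul_sum, ← hf t m]
    simp only [B]
    ring
  refine ⟨A, B, T, inferInstance, pt, ?_, hpt, ?_⟩
  · have hc : Fintype.card T = Fintype.card {C : Finset G // C.card ≤ d} +
        Fintype.card {C : Finset G // C.card ≤ d - 1} := Fintype.card_sum
    rw [hc, card_small_subsets, card_small_subsets]
    obtain ⟨m, rfl⟩ : ∃ m, M = m + 1 := ⟨M - 1, by omega⟩
    have h1 : d - 1 + 1 = d := by omega
    rw [h1]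
    have h2 : m + 1 - 1 = m := rfl
    rw [pascal_sum m d]
    simp only [h2]
  · intro t t' hiff
    have hodd : ∀ m, m < M → (Odd (cnt t m) ↔ Odd (cnt t' m)) := by
      intro m hm
      have h := hiff m hm
      rw [hAB t m, hAB t' m] at h
      rw [← hsign t m hm, ← hsign t' m hm]
      exact h
    have hlast : ∀ s : T, cnt s (M - 1) = e s := by
      intro s
      have hemp : (Cset s).filter (fun c : G => (M - 1) ≤ (c:ℕ)) = ∅ := by
        apply Finset.eq_empty_of_forall_notMem
        intro c hc
        rw [Finset.mem_filter] at hc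
        have := c.isLt
        omega
      show (Finset.filter (fun c : G => M - 1 ≤ (c:ℕ)) (Cset s)).card + e s = e s
      rw [hemp, Finset.card_empty, Nat.zero_add]
    have hee : e t = e t' := by
      have h := hodd (M - 1) (by omega)
      rw [hlast t, hlast t', Nat.odd_iff, Nat.odd_iff] at h
      have h1 := he1 t
      have h2 := he1 t'
      omega
    have keycnt : ∀ (Cs : Finset G) (c : G),
        (Cs.filter (fun x : G => (c:ℕ) ≤ (x:ℕ))).card =
          (Cs.filter (fun x : G => (c:ℕ) + 1 ≤ (x:ℕ))).card + (if c ∈ Cs then 1 else 0) := by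
      intro Cs c
      have hsplit : Cs.filter (fun x : G => (c:ℕ) ≤ (x:ℕ)) =
          Cs.filter (fun x : G => (c:ℕ) + 1 ≤ (x:ℕ)) ∪ Cs.filter (fun x : G => x = c) := by
        rw [← Finset.filter_or]
        apply Finset.filter_congr
        intro x _
        constructor
        · intro hcx
          by_cases hx : (x:ℕ) = (c:ℕ)
          · exact Or.inr (Fin.ext hx)
          · exact Or.inl (by omega)
        · rintro (hcx | rfl)
          · omega
          · exact le_refl _
      rw [hsplit, Finset.card_union_of_disjoint, Finset.filter_eq']
      · rw [apply_ite Finset.card, Finset.card_singleton, Finset.card_empty]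
      · rw [Finset.disjoint_left]
        intro x hx1 hx2
        rw [Finset.mem_filter] at hx1 hx2
        have hxc : x = c := hx2.2
        subst hxc
        omega
    have hCC : Cset t = Cset t' := by
      ext c
      have hm1 : (c:ℕ) < M := by have := c.isLt; omega
      have hm2 : (c:ℕ) + 1 < M := by have := c.isLt; omega
      have h1 := hodd (c:ℕ) hm1
      have h2 := hodd ((c:ℕ) + 1) hm2
      simp only [cnt] at h1 h2
      rw [keycnt (Cset t) c, keycnt (Cset t') c] at h1
      rw [Nat.odd_iff, Nat.odd_iff] at h1 h2
      constructor
      · intro hc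
        by_contra hc2
        rw [if_pos hc, if_neg hc2] at h1
        omega
      · intro hc
        by_contra hc2
        rw [if_neg hc2, if_pos hc] at h1
        omega
    cases t with
    | inl a =>
      cases t' with
      | inl a2 =>
        have : a.val = a2.val := hCC
        exact congrArg Sum.inl (Subtype.ext this)
      | inr a2 => simp [e] at hee
    | inr a =>
      cases t' with
      | inl a2 => simp [e] at hee
      | inr a2 =>
        have : a.val = a2.val := hCC
        exact congrArg Sum.inr (Subtype.ext this)

section Part1
variable (n : ℕ → ℕ) (W : (l : ℕ) → Matrix (Fin (n (l + 1))) (Fin (n l)) ℝ)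
    (b : (l : ℕ) → Fin (n (l + 1)) → ℝ) (L : ℕ)

lemma mulVec_combo {m k : ℕ} (Wm : Matrix (Fin m) (Fin k) ℝ) (bm : Fin m → ℝ)
    (f g : Fin k → ℝ) (a c : ℝ) (hac : a + c = 1) (v : Fin m) :
    (Wm.mulVec (fun u => a * f u + c * g u) + bm) v =
      a * (Wm.mulVec f + bm) v + c * (Wm.mulVec g + bm) v := by
  simp only [Pi.add_apply, Matrix.mulVec, dotProduct]
  rw [Finset.sum_congr rfl (fun u _ => (by ring :
      Wm v u * (a * f u + c * g u) = a * (Wm v u * f u) + c * (Wm v u * g u))),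
    Finset.sum_add_distrib, ← Finset.mul_sum, ← Finset.mul_sum]
  linear_combination (-(bm v)) * hac

lemma relu_combo_pattern (x y z : Fin (n 0) → ℝ)
    (hy : reluPattern n W b L y = reluPattern n W b L x)
    (hz : reluPattern n W b L z = reluPattern n W b L x)
    (a c : ℝ) (ha : 0 ≤ a) (hc : 0 ≤ c) (hac : a + c = 1) :
    reluPattern n W b L (fun i => a * y i + c * z i) = reluPattern n W b L x := by
  set w : Fin (n 0) → ℝ := fun i => a * y i + c * z i with hw
  have hsign : ∀ l, l < L → ∀ v, (0 < ((W l).mulVec (reluHidden n W b y l) + b l) v) =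
      (0 < ((W l).mulVec (reluHidden n W b z l) + b l) v) := by
    intro l hl v
    have h1 : reluPattern n W b L y ⟨l, hl⟩ v = reluPattern n W b L x ⟨l, hl⟩ v :=
      congrFun (congrFun hy ⟨l, hl⟩) v
    have h2 : reluPattern n W b L z ⟨l, hl⟩ v = reluPattern n W b L x ⟨l, hl⟩ v :=
      congrFun (congrFun hz ⟨l, hl⟩) v
    exact h1.trans h2.symm
  have hpre : ∀ l, l < L →
      reluHidden n W b w l = fun v => a * reluHidden n W b y l v + c * reluHidden n W b z l v := by
    intro l
    induction l with
    | zero =>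
      intro _
      rfl
    | succ l ih =>
      intro hl
      have hl2 : l < L := Nat.lt_of_succ_lt hl
      have ihh := ih hl2
      funext v
      show max (((W l).mulVec (reluHidden n W b w l) + b l) v) 0 =
        a * max (((W l).mulVec (reluHidden n W b y l) + b l) v) 0 +
        c * max (((W l).mulVec (reluHidden n W b z l) + b l) v) 0
      rw [ihh, mulVec_combo (W l) (b l) _ _ a c hac v]
      set P := ((W l).mulVec (reluHidden n W b y l) + b l) v with hP
      set Q := ((W l).mulVec (reluHidden n W b z l) + b l) v with hQ
      by_cases hpos : 0 < P
      · have hqpos : 0 < Q := (hsign l hl2 v) ▸ hpos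
        have hcpos : 0 < a * P + c * Q := by
          rcases eq_or_lt_of_le ha with h | h
          · have : c = 1 := by linarith
            nlinarith
          · nlinarith
        rw [max_eq_left hcpos.le, max_eq_left hpos.le, max_eq_left hqpos.le]
      · have hqneg : ¬ (0 < Q) := fun hq => hpos (((hsign l hl2 v).symm) ▸ hq)
        push_neg at hpos hqneg
        have : a * P + c * Q ≤ 0 := by nlinarith
        rw [max_eq_right this, max_eq_right hpos, max_eq_right hqneg]
        ring
  funext l v
  have h1 : reluPattern n W b L y l v = reluPattern n W b L x l v := congrFun (congrFun hy l) v
  show (0 < ((W l.1).mulVec (reluHidden n W b w l.1) + b l.1) v) = reluPattern n W b L x l v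
  rw [← h1]
  apply propext
  rw [hpre l.1 l.2, mulVec_combo (W l.1) (b l.1) _ _ a c hac v]
  set P := ((W l.1).mulVec (reluHidden n W b y l.1) + b l.1) v with hP
  set Q := ((W l.1).mulVec (reluHidden n W b z l.1) + b l.1) v with hQ
  have hsg : (0 < P) = (0 < Q) := hsign l.1 l.2 v
  show (0 < a * P + c * Q) ↔ (0 < P)
  constructor
  · intro h
    by_contra hp
    have hq : ¬ (0 < Q) := fun hq0 => hp (hsg ▸ hq0)
    push_neg at hp hq
    nlinarith
  · intro hp
    have hq : 0 < Q := hsg ▸ hp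
    rcases eq_or_lt_of_le ha with h | h
    · have : c = 1 := by linarith
      nlinarith
    · nlinarith

lemma region_count (K : Type) [Fintype K] (ι : K → (Fin (n 0) → ℝ))
    (hinj : ∀ k k', reluPattern n W b L (ι k) = reluPattern n W b L (ι k') → k = k') :
    Fintype.card K ≤ (linearRegions n W b L).ncard := by
  classical
  have hconv : ∀ x, Convex ℝ {y | reluPattern n W b L y = reluPattern n W b L x} := by
    intro x y hy z hz a c ha hc hac
    have := relu_combo_pattern n W b L x y z hy hz a c ha hc hac
    show reluPattern n W b L (a • y + c • z) = reluPattern n W b L x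
    convert this using 2
    rfl
  have hcc : ∀ x, connectedComponentIn
      {y | reluPattern n W b L y = reluPattern n W b L x} x =
      {y | reluPattern n W b L y = reluPattern n W b L x} := by
    intro x
    exact (hconv x).isPreconnected.connectedComponentIn rfl
  let bp : (Fin (n 0) → ℝ) → ((l : Fin L) → Fin (n (l.1 + 1)) → Bool) := fun x l j =>
    decide (0 < ((W l.1).mulVec (reluHidden n W b x l.1) + b l.1) j)
  have hbp : ∀ x y : Fin (n 0) → ℝ,
      (reluPattern n W b L y = reluPattern n W b L x) ↔ bp y = bp x := by
    intro x y
    constructor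
    · intro h
      funext l j
      simp only [bp]
      exact decide_eq_decide.mpr (iff_of_eq (congrFun (congrFun h l) j))
    · intro h
      funext l j
      have := congrFun (congrFun h l) j
      simp only [bp, decide_eq_decide] at this
      exact propext this
  have hlr : linearRegions n W b L =
      (fun cfg => {y | bp y = cfg}) '' (Set.range bp) := by
    ext R
    constructor
    · rintro ⟨x, rfl⟩
      refine ⟨bp x, ⟨x, rfl⟩, ?_⟩
      rw [hcc x]
      ext y
      exact (hbp x y).symm
    · rintro ⟨cfg, ⟨x, rfl⟩, rfl⟩
      exact ⟨x, by rw [hcc x]; ext y; exact (hbp x y).symm⟩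
  have hfin : (linearRegions n W b L).Finite := by
    rw [hlr]
    exact (Set.toFinite (Set.range bp)).image _
  have hr : ∀ k, connectedComponentIn
      {y | reluPattern n W b L y = reluPattern n W b L (ι k)} (ι k) ∈ linearRegions n W b L :=
    fun k => ⟨ι k, rfl⟩
  have hinj2 : Function.Injective (fun k => connectedComponentIn
      {y | reluPattern n W b L y = reluPattern n W b L (ι k)} (ι k)) := by
    intro k k' h
    simp only at h
    apply hinj
    have h1 : ι k ∈ connectedComponentIn
        {y | reluPattern n W b L y = reluPattern n W b L (ι k)} (ι k) :=
      mem_connectedComponentIn rfl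
    rw [h, hcc (ι k')] at h1
    exact h1
  calc Fintype.card K
      = (Set.range (fun k => connectedComponentIn
          {y | reluPattern n W b L y = reluPattern n W b L (ι k)} (ι k))).ncard := by
        rw [← Set.image_univ, Set.ncard_image_of_injective _ hinj2, Set.ncard_univ,
          Nat.card_eq_fintype_card]
    _ ≤ (linearRegions n W b L).ncard := by
        apply Set.ncard_le_ncard _ hfin
        rintro R ⟨k, rfl⟩
        exact hr k
end Part1


noncomputable def sawc : ℕ → ℝ := fun j => if j = 0 then 1 else if j % 2 = 0 then 2 else -2

lemma saw_sum (a : ℝ) (j : ℕ) :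
    ∑ k ∈ Finset.range (j + 1), sawc k * (a - k) =
      if j % 2 = 0 then a - j else (j : ℝ) + 1 - a := by
  induction j with
  | zero => simp [sawc]
  | succ j ih =>
    rw [Finset.sum_range_succ, ih]
    have hcc : sawc (j + 1) = if (j + 1) % 2 = 0 then 2 else -2 := by
      simp [sawc]
    by_cases h : j % 2 = 0
    · have h1 : (j + 1) % 2 ≠ 0 := by omega
      rw [if_pos h, hcc, if_neg h1, if_neg h1]
      push_cast
      ring
    · have h1 : (j + 1) % 2 = 0 := by omega
      rw [if_neg h, hcc, if_pos h1, if_pos h1]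
      push_cast
      ring

-- sum over a block-structured range
lemma sum_range_mul_blocks (P : ℕ) (f : ℕ → ℝ) (d : ℕ) :
    ∑ w ∈ Finset.range (d * P), f w =
      ∑ a ∈ Finset.range d, ∑ j ∈ Finset.range P, f (j + a * P) := by
  induction d with
  | zero => simp
  | succ d ih =>
    have : (d + 1) * P = d * P + P := by ring
    rw [this, Finset.range_add, Finset.sum_union, ih, Finset.sum_range_succ, Finset.sum_map]
    · congr 1
      apply Finset.sum_congr rfl
      intro j _
      congr 1
      simp [addLeftEmbedding]
      omega
    · -- disjoint
      rw [Finset.disjoint_left]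
      intro w hw hw2
      simp at hw
      simp [addLeftEmbedding] at hw2
      omega

noncomputable def inCoef (n : ℕ → ℕ) (l : ℕ) (v i : ℕ) : ℝ :=
  if l = 0 then (if v = i then 1 else 0)
  else if v < n 0 * (n l / n 0) ∧ v / (n l / n 0) = i then sawc (v % (n l / n 0)) else 0

noncomputable def netW (n : ℕ → ℕ) (L : ℕ) (A : ℕ → ℕ → ℝ) (l : ℕ) :
    Matrix (Fin (n (l + 1))) (Fin (n l)) ℝ :=
  if l + 1 < L then
    Matrix.of fun u v => if (u : ℕ) < n 0 * (n (l + 1) / n 0) then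
      ((n (l + 1) / n 0 : ℕ) : ℝ) * inCoef n l (v : ℕ) ((u : ℕ) / (n (l + 1) / n 0)) else 0
  else if l + 1 = L then
    Matrix.of fun u v => ∑ i ∈ Finset.range (n 0), A (u : ℕ) i * inCoef n l (v : ℕ) i
  else 0

noncomputable def netb (n : ℕ → ℕ) (L : ℕ) (B : ℕ → ℝ) (l : ℕ) : Fin (n (l + 1)) → ℝ :=
  fun u =>
    if l + 1 < L then
      (if (u : ℕ) < n 0 * (n (l + 1) / n 0) then -(((u : ℕ) % (n (l + 1) / n 0) : ℕ) : ℝ)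
       else -1)
    else if l + 1 = L then B (u : ℕ) else 0

section FWD
variable (n : ℕ → ℕ) (L : ℕ) (A : ℕ → ℕ → ℝ) (B : ℕ → ℝ)
  (u : ℕ → ℕ → ℝ) (cells : ℕ → ℕ → ℕ) (x : Fin (n 0) → ℝ)

-- the "effective input" computation through the folding layers
lemma net_forward
    (hn0 : 1 ≤ n 0) (hwidth : ∀ l, 1 ≤ l → l ≤ L → n 0 ≤ n l)
    (hx : ∀ i : Fin (n 0), x i = u 0 (i : ℕ))
    (hcell : ∀ l i, 1 ≤ l → l < L → i < n 0 →
      cells l i < n l / n 0 ∧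
      ((cells l i : ℝ) < ((n l / n 0 : ℕ) : ℝ) * u (l - 1) i) ∧
      (((n l / n 0 : ℕ) : ℝ) * u (l - 1) i
        = if cells l i % 2 = 0 then (cells l i : ℝ) + u l i
          else (cells l i : ℝ) + 1 - u l i))
    (hrange : ∀ l i, 1 ≤ l → l < L → i < n 0 → 0 < u l i ∧ u l i < 1) :
    ∀ l, l < L → ∀ i, i < n 0 →
      (∑ v : Fin (n l), inCoef n l (v : ℕ) i * reluHidden n (netW n L A) (netb n L B) x l v)
        = u l i := by
  intro l
  induction l with
  | zero =>
    intro _ i hi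
    rw [Finset.sum_eq_single (⟨i, hi⟩ : Fin (n 0))]
    · show inCoef n 0 i i * x ⟨i, hi⟩ = u 0 i
      rw [inCoef, if_pos rfl, if_pos rfl, one_mul]
      exact hx ⟨i, hi⟩
    · intro v _ hv
      show inCoef n 0 (v : ℕ) i * x v = 0
      rw [inCoef, if_pos rfl, if_neg, zero_mul]
      intro h
      exact hv (Fin.ext h)
    · intro h
      exact absurd (Finset.mem_univ _) h
  | succ l ih =>
    intro hl1 i hi
    have hl : l < L := Nat.lt_of_succ_lt hl1
    set P := n (l + 1) / n 0 with hPdef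
    have hP : 1 ≤ P := Nat.one_le_div_iff (by omega) |>.2 (hwidth (l+1) (by omega) (by omega))
    have hgb : n 0 * P ≤ n (l + 1) := Nat.mul_div_le (n (l+1)) (n 0)
    -- pre-activation formula
    have hpre : ∀ w : Fin (n (l + 1)),
        ((netW n L A l).mulVec (reluHidden n (netW n L A) (netb n L B) x l) + netb n L B l) w =
          (if (w : ℕ) < n 0 * P then
            ((P : ℕ) : ℝ) * u l ((w : ℕ) / P) - (((w : ℕ) % P : ℕ) : ℝ) else -1) := by
      intro w
      have hWl : netW n L A l = Matrix.of (fun (w' : Fin (n (l + 1))) (v : Fin (n l)) =>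
          if (w' : ℕ) < n 0 * P then
          ((P : ℕ) : ℝ) * inCoef n l (v : ℕ) ((w' : ℕ) / P) else 0) := by
        unfold netW
        rw [if_pos hl1]
      rw [Pi.add_apply, hWl]
      show (∑ v : Fin (n l), (if (w : ℕ) < n 0 * P then ((P:ℕ):ℝ) * inCoef n l (v : ℕ) ((w:ℕ)/P) else 0) *
        reluHidden n (netW n L A) (netb n L B) x l v) + netb n L B l w = _
      rw [netb]
      by_cases hw : (w : ℕ) < n 0 * P
      · rw [if_pos hw, if_pos hl1, if_pos hw]
        have hdiv : (w : ℕ) / P < n 0 := (Nat.div_lt_iff_lt_mul (by omega)).2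
          (by rw [mul_comm] at hw ⊢; exact hw)
        rw [Finset.sum_congr rfl (fun v _ => by rw [if_pos hw, mul_assoc]),
          ← Finset.mul_sum, ih hl ((w : ℕ)/P) hdiv]
        ring
      · rw [if_neg hw, if_pos hl1, if_neg hw]
        rw [Finset.sum_congr rfl (fun v _ => by rw [if_neg hw, zero_mul]), Finset.sum_const_zero]
        ring
    set F : ℕ → ℝ := fun w =>
      (if w < n 0 * P ∧ w / P = i then sawc (w % P) else 0) *
        max (if w < n 0 * P then ((P:ℕ):ℝ) * u l (w / P) - ((w % P : ℕ) : ℝ) else -1) 0 with hF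
    have hsummand : ∀ v : Fin (n (l + 1)),
        inCoef n (l + 1) (v : ℕ) i * reluHidden n (netW n L A) (netb n L B) x (l + 1) v =
          F (v : ℕ) := by
      intro v
      show inCoef n (l + 1) (v : ℕ) i *
        max ((((netW n L A l).mulVec (reluHidden n (netW n L A) (netb n L B) x l)
          + netb n L B l)) v) 0 = _
      rw [hpre v, hF, inCoef, if_neg (Nat.succ_ne_zero l)]
    calc (∑ v : Fin (n (l + 1)), inCoef n (l + 1) (v : ℕ) i *
            reluHidden n (netW n L A) (netb n L B) x (l + 1) v)
        = ∑ v : Fin (n (l + 1)), F (v : ℕ) :=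
          Finset.sum_congr rfl (fun v _ => hsummand v)
      _ = ∑ w ∈ Finset.range (n (l + 1)), F w := Fin.sum_univ_eq_sum_range _ _
      _ = ∑ w ∈ Finset.range (n 0 * P), F w := by
          rw [Finset.range_eq_Ico, ← Finset.sum_Ico_consecutive _ (Nat.zero_le (n 0 * P)) hgb,
            ← Finset.range_eq_Ico]
          have htail : ∑ w ∈ Finset.Ico (n 0 * P) (n (l + 1)), F w = 0 := by
            apply Finset.sum_eq_zero
            intro w hw
            rw [Finset.mem_Ico] at hw
            rw [hF]
            show (if w < n 0 * P ∧ w / P = i then sawc (w % P) else 0) * _ = 0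
            rw [if_neg (by push_neg; intro h; omega), zero_mul]
          rw [htail, add_zero]
      _ = ∑ a ∈ Finset.range (n 0), ∑ j ∈ Finset.range P, F (j + a * P) :=
          sum_range_mul_blocks P F (n 0)
      _ = ∑ a ∈ Finset.range (n 0), ∑ j ∈ Finset.range P,
            (if a = i then sawc j * max (((P:ℕ):ℝ) * u l a - (j : ℝ)) 0 else 0) := by
          apply Finset.sum_congr rfl
          intro a ha
          apply Finset.sum_congr rfl
          intro j hj
          rw [Finset.mem_range] at ha hj
          have h1 : j + a * P < n 0 * P := by
            calc j + a * P < P + a * P := by omega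
            _ = (a + 1) * P := by ring
            _ ≤ n 0 * P := Nat.mul_le_mul_right _ (by omega)
          have h2 : (j + a * P) / P = a := by
            rw [Nat.add_mul_div_right _ _ (by omega : 0 < P), Nat.div_eq_of_lt hj, zero_add]
          have h3 : (j + a * P) % P = j := by
            rw [Nat.add_mul_mod_self_right, Nat.mod_eq_of_lt hj]
          rw [hF]
          show (if (j + a * P) < n 0 * P ∧ (j + a * P) / P = i then sawc ((j + a * P) % P)
              else 0) * max (if (j + a * P) < n 0 * P then
              ((P:ℕ):ℝ) * u l ((j + a * P) / P) - (((j + a * P) % P : ℕ) : ℝ) else -1) 0 = _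
          rw [h2, h3, if_pos h1]
          rw [if_congr (and_iff_right h1) rfl rfl]
          by_cases hai : a = i
          · rw [if_pos hai, if_pos hai]
          · rw [if_neg hai, if_neg hai, zero_mul]
      _ = ∑ j ∈ Finset.range P, sawc j * max (((P:ℕ):ℝ) * u l i - (j : ℝ)) 0 := by
          rw [Finset.sum_eq_single i]
          · exact Finset.sum_congr rfl (fun j _ => by rw [if_pos rfl])
          · intro a _ hai
            apply Finset.sum_eq_zero
            intro j _
            rw [if_neg hai]
          · intro hnot
            exact absurd (Finset.mem_range.2 hi) hnot
      _ = u (l + 1) i := by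
          obtain ⟨hc1, hc2, hc3⟩ := hcell (l + 1) i (by omega) hl1 hi
          obtain ⟨hu0, hu1⟩ := hrange (l + 1) i (by omega) hl1 hi
          rw [Nat.add_sub_cancel] at hc2 hc3
          set c := cells (l + 1) i with hcdef
          set a : ℝ := ((P:ℕ):ℝ) * u l i with hadef
          have halt : a < (c : ℝ) + 1 := by
            by_cases hpar : c % 2 = 0
            · rw [if_pos hpar] at hc3; linarith
            · rw [if_neg hpar] at hc3; linarith
          have hsub : Finset.range (c + 1) ⊆ Finset.range P :=
            Finset.range_subset_range.2 (by omega)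
          rw [← Finset.sum_subset hsub]
          · have : ∀ j ∈ Finset.range (c + 1),
                sawc j * max (a - (j:ℝ)) 0 = sawc j * (a - (j:ℝ)) := by
              intro j hj
              rw [Finset.mem_range] at hj
              have hjc : (j : ℝ) ≤ (c : ℝ) := by exact_mod_cast Nat.lt_succ_iff.1 hj
              rw [max_eq_left (by linarith)]
            rw [Finset.sum_congr rfl this, saw_sum a c]
            by_cases hpar : c % 2 = 0
            · rw [if_pos hpar]
              rw [if_pos hpar] at hc3
              linarith
            · rw [if_neg hpar]
              rw [if_neg hpar] at hc3
              linarith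
          · intro j hjP hjc
            rw [Finset.mem_range] at hjP
            rw [Finset.mem_range, Nat.lt_succ_iff, not_le] at hjc
            have : ((c : ℝ)) + 1 ≤ (j : ℝ) := by exact_mod_cast hjc
            rw [max_eq_right (by linarith), mul_zero]

lemma net_pre_fold
    (hn0 : 1 ≤ n 0) (hwidth : ∀ l, 1 ≤ l → l ≤ L → n 0 ≤ n l)
    (hx : ∀ i : Fin (n 0), x i = u 0 (i : ℕ))
    (hcell : ∀ l i, 1 ≤ l → l < L → i < n 0 →
      cells l i < n l / n 0 ∧
      ((cells l i : ℝ) < ((n l / n 0 : ℕ) : ℝ) * u (l - 1) i) ∧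
      (((n l / n 0 : ℕ) : ℝ) * u (l - 1) i
        = if cells l i % 2 = 0 then (cells l i : ℝ) + u l i
          else (cells l i : ℝ) + 1 - u l i))
    (hrange : ∀ l i, 1 ≤ l → l < L → i < n 0 → 0 < u l i ∧ u l i < 1) :
    ∀ l, l + 1 < L → ∀ w : Fin (n (l + 1)),
      ((netW n L A l).mulVec (reluHidden n (netW n L A) (netb n L B) x l) + netb n L B l) w =
        (if (w : ℕ) < n 0 * (n (l + 1) / n 0) then
          ((n (l + 1) / n 0 : ℕ) : ℝ) * u l ((w : ℕ) / (n (l + 1) / n 0))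
            - (((w : ℕ) % (n (l + 1) / n 0) : ℕ) : ℝ)
         else -1) := by
  intro l hl1 w
  have hl : l < L := Nat.lt_of_succ_lt hl1
  set P := n (l + 1) / n 0 with hPdef
  have hP : 1 ≤ P := Nat.one_le_div_iff (by omega) |>.2 (hwidth (l+1) (by omega) (by omega))
  have hWl : netW n L A l = Matrix.of (fun (w' : Fin (n (l + 1))) (v : Fin (n l)) =>
      if (w' : ℕ) < n 0 * P then
      ((P : ℕ) : ℝ) * inCoef n l (v : ℕ) ((w' : ℕ) / P) else 0) := by
    unfold netW
    rw [if_pos hl1]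
  rw [Pi.add_apply, hWl]
  show (∑ v : Fin (n l), (if (w : ℕ) < n 0 * P then
      ((P:ℕ):ℝ) * inCoef n l (v : ℕ) ((w:ℕ)/P) else 0) *
    reluHidden n (netW n L A) (netb n L B) x l v) + netb n L B l w = _
  rw [netb]
  by_cases hw : (w : ℕ) < n 0 * P
  · rw [if_pos hw, if_pos hl1, if_pos hw]
    have hdiv : (w : ℕ) / P < n 0 := (Nat.div_lt_iff_lt_mul (by omega)).2
      (by rw [mul_comm] at hw ⊢; exact hw)
    rw [Finset.sum_congr rfl (fun v _ => by rw [if_pos hw, mul_assoc]),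
      ← Finset.mul_sum,
      net_forward n L A B u cells x hn0 hwidth hx hcell hrange l hl ((w : ℕ)/P) hdiv]
    ring
  · rw [if_neg hw, if_pos hl1, if_neg hw]
    rw [Finset.sum_congr rfl (fun v _ => by rw [if_neg hw, zero_mul]), Finset.sum_const_zero]
    ring

lemma net_last
    (hn0 : 1 ≤ n 0) (hwidth : ∀ l, 1 ≤ l → l ≤ L → n 0 ≤ n l)
    (hx : ∀ i : Fin (n 0), x i = u 0 (i : ℕ))
    (hcell : ∀ l i, 1 ≤ l → l < L → i < n 0 →
      cells l i < n l / n 0 ∧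
      ((cells l i : ℝ) < ((n l / n 0 : ℕ) : ℝ) * u (l - 1) i) ∧
      (((n l / n 0 : ℕ) : ℝ) * u (l - 1) i
        = if cells l i % 2 = 0 then (cells l i : ℝ) + u l i
          else (cells l i : ℝ) + 1 - u l i))
    (hrange : ∀ l i, 1 ≤ l → l < L → i < n 0 → 0 < u l i ∧ u l i < 1)
    (l : ℕ) (hlL : l + 1 = L) :
    ∀ w : Fin (n (l + 1)),
      ((netW n L A l).mulVec (reluHidden n (netW n L A) (netb n L B) x l) + netb n L B l) w
        = (∑ i ∈ Finset.range (n 0), A (w : ℕ) i * u l i) + B (w : ℕ) := by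
  intro w
  have hnot : ¬ (l + 1 < L) := by omega
  have hWl : netW n L A l = Matrix.of (fun (w' : Fin (n (l + 1))) (v : Fin (n l)) =>
      ∑ i ∈ Finset.range (n 0), A (w' : ℕ) i * inCoef n l (v : ℕ) i) := by
    unfold netW
    rw [if_neg hnot, if_pos hlL]
  rw [Pi.add_apply, hWl]
  show (∑ v : Fin (n l), (∑ i ∈ Finset.range (n 0), A (w : ℕ) i * inCoef n l (v : ℕ) i) *
      reluHidden n (netW n L A) (netb n L B) x l v) + netb n L B l w = _
  rw [netb, if_neg hnot, if_pos hlL]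
  congr 1
  rw [Finset.sum_congr rfl (fun v _ => Finset.sum_mul _ _ _), Finset.sum_comm]
  apply Finset.sum_congr rfl
  intro i hi
  rw [Finset.mem_range] at hi
  rw [Finset.sum_congr rfl (fun v _ => mul_assoc _ _ _), ← Finset.mul_sum,
    net_forward n L A B u cells x hn0 hwidth hx hcell hrange l (by omega) i hi]
end FWD


/-- For `n_0 ≥ 1`, `L ≥ 1` and hidden widths `n_l ≥ n_0` (`1 ≤ l ≤ L`), there is an
`L`-layer ReLU network (with scalar output) whose number of linear regions is at least
`(∏_{l=1}^{L-1} ⌊n_l/n_0⌋^{n_0}) · ∑_{j=0}^{n_0} C(n_L, j)`. -/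
theorem relu_regions_lower_bound
    (L : ℕ) (hL : 1 ≤ L) (n : ℕ → ℕ) (hn0 : 1 ≤ n 0)
    (hwidth : ∀ l, 1 ≤ l → l ≤ L → n 0 ≤ n l) :
    ∃ (W : (l : ℕ) → Matrix (Fin (n (l + 1))) (Fin (n l)) ℝ)
      (b : (l : ℕ) → Fin (n (l + 1)) → ℝ)
      (_Wout : Matrix (Fin 1) (Fin (n L)) ℝ),
      (∏ l ∈ Finset.Ico 1 L, (n l / n 0) ^ (n 0)) *
          (∑ j ∈ Finset.range (n 0 + 1), (n L).choose j) ≤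
        (linearRegions n W b L).ncard := by
  classical
  have hnL : 1 ≤ n L := le_trans hn0 (hwidth L hL le_rfl)
  obtain ⟨Aa, Bb, T, instT, pt, hcard, hpt, hTinj⟩ := arrangement_exists (n 0) (n L) hn0 hnL
  letI : Fintype T := instT
  refine ⟨netW n L Aa, netb n L Bb, 0, ?_⟩
  set Pl : ℕ → ℕ := fun l => n l / n 0 with hPl
  have hPl1 : ∀ l, 1 ≤ l → l ≤ L → 1 ≤ Pl l := fun l h1 h2 =>
    (Nat.one_le_div_iff (by omega)).2 (hwidth l h1 h2)
  set K := ((l : Fin (L - 1)) → Fin (n 0) → Fin (Pl (l.1 + 1))) × T with hK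
  let cellsOf : K → ℕ → ℕ → ℕ := fun q l i =>
    if h : l - 1 < L - 1 ∧ i < n 0 then (q.1 ⟨l - 1, h.1⟩ ⟨i, h.2⟩ : ℕ) else 0
  let uOf : K → ℕ → ℕ → ℝ := fun q l => chain Pl L (cellsOf q) (pt q.2) (L - 1 - l)
  let ι : K → (Fin (n 0) → ℝ) := fun q i => uOf q 0 (i : ℕ)
  -- basic facts about cells
  have hcellbound : ∀ (q : K) l i, 1 ≤ l → l < L → i < n 0 → cellsOf q l i < Pl l := by
    intro q l i h1 h2 hi
    have hcond : l - 1 < L - 1 ∧ i < n 0 := ⟨by omega, hi⟩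
    have : cellsOf q l i = (q.1 ⟨l - 1, hcond.1⟩ ⟨i, hcond.2⟩ : ℕ) := dif_pos hcond
    rw [this]
    have hlt := (q.1 ⟨l - 1, hcond.1⟩ ⟨i, hcond.2⟩).isLt
    have he : l - 1 + 1 = l := by omega
    exact lt_of_lt_of_eq hlt (congrArg Pl he)
  -- membership of the chain values in (0,1)
  have hchain_mem : ∀ (q : K) k, k ≤ L - 1 → ∀ i, i < n 0 →
      0 < chain Pl L (cellsOf q) (pt q.2) k i ∧ chain Pl L (cellsOf q) (pt q.2) k i < 1 := by
    intro q k
    induction k with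
    | zero => intro _ i hi; exact hpt q.2 i
    | succ k ih =>
      intro hk i hi
      have hlay1 : 1 ≤ L - 1 - k := by omega
      have hlayL : L - 1 - k < L := by omega
      show 0 < finv (Pl (L - 1 - k)) (cellsOf q (L - 1 - k) i)
          (chain Pl L (cellsOf q) (pt q.2) k i) ∧ _ < 1
      exact finv_mem _ _ _ (hPl1 _ hlay1 (by omega))
        (hcellbound q _ i hlay1 hlayL hi) (ih (by omega) i hi)
  have hrangeOf : ∀ (q : K) l i, 1 ≤ l → l < L → i < n 0 → 0 < uOf q l i ∧ uOf q l i < 1 :=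
    fun q l i _ h2 hi => hchain_mem q (L - 1 - l) (by omega) i hi
  -- the cell relation
  have hu : ∀ (q : K) l i, 1 ≤ l → l < L → i < n 0 →
      cellsOf q l i < Pl l ∧
      ((cellsOf q l i : ℝ) < ((Pl l : ℕ) : ℝ) * uOf q (l - 1) i) ∧
      (((Pl l : ℕ) : ℝ) * uOf q (l - 1) i < (cellsOf q l i : ℝ) + 1) ∧
      (((Pl l : ℕ) : ℝ) * uOf q (l - 1) i
        = if cellsOf q l i % 2 = 0 then (cellsOf q l i : ℝ) + uOf q l i
          else (cellsOf q l i : ℝ) + 1 - uOf q l i) := by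
    intro q l i h1 h2 hi
    have hkey : uOf q (l - 1) i = finv (Pl l) (cellsOf q l i) (uOf q l i) := by
      show chain Pl L (cellsOf q) (pt q.2) (L - 1 - (l - 1)) i = _
      have e1 : L - 1 - (l - 1) = (L - 1 - l) + 1 := by omega
      rw [e1]
      show finv (Pl (L - 1 - (L - 1 - l))) (cellsOf q (L - 1 - (L - 1 - l)) i)
        (chain Pl L (cellsOf q) (pt q.2) (L - 1 - l) i) = _
      have e2 : L - 1 - (L - 1 - l) = l := by omega
      rw [e2]
    have hul := hrangeOf q l i h1 h2 hi
    have hfe := finv_eq (Pl l) (cellsOf q l i) (uOf q l i) (hPl1 l h1 (by omega))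
    rw [hkey, hfe]
    refine ⟨hcellbound q l i h1 h2 hi, ?_, ?_, rfl⟩
    · split <;> linarith [hul.1, hul.2]
    · split <;> linarith [hul.1, hul.2]
  have huOf3 : ∀ q : K, ∀ l i, 1 ≤ l → l < L → i < n 0 →
      cellsOf q l i < n l / n 0 ∧
      ((cellsOf q l i : ℝ) < ((n l / n 0 : ℕ) : ℝ) * uOf q (l - 1) i) ∧
      (((n l / n 0 : ℕ) : ℝ) * uOf q (l - 1) i
        = if cellsOf q l i % 2 = 0 then (cellsOf q l i : ℝ) + uOf q l i
          else (cellsOf q l i : ℝ) + 1 - uOf q l i) := by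
    intro q l i h1 h2 hi
    obtain ⟨a1, a2, _, a4⟩ := hu q l i h1 h2 hi
    exact ⟨a1, a2, a4⟩
  have hxOf : ∀ q : K, ∀ i : Fin (n 0), ι q i = uOf q 0 (i : ℕ) := fun q i => rfl
  -- the value at the top layer is the arrangement point
  have hulast : ∀ q : K, ∀ i, uOf q (L - 1) i = pt q.2 i := by
    intro q i
    show chain Pl L (cellsOf q) (pt q.2) (L - 1 - (L - 1)) i = pt q.2 i
    rw [Nat.sub_self]
    rfl
  -- injectivity of patterns
  have hinj : ∀ q q' : K, reluPattern n (netW n L Aa) (netb n L Bb) L (ι q) =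
      reluPattern n (netW n L Aa) (netb n L Bb) L (ι q') → q = q' := by
    intro q q' hpat
    have ht : q.2 = q'.2 := by
      apply hTinj
      intro m hm
      have hLL : L - 1 + 1 = L := by omega
      have hmm : m < n (L - 1 + 1) := by rw [hLL]; exact hm
      set w : Fin (n (L - 1 + 1)) := ⟨m, hmm⟩ with hw
      have h1 := net_last n L Aa Bb (uOf q) (cellsOf q) (ι q) hn0 hwidth (hxOf q)
        (huOf3 q) (fun l i a b c => hrangeOf q l i a b c) (L - 1) hLL w
      have h2 := net_last n L Aa Bb (uOf q') (cellsOf q') (ι q') hn0 hwidth (hxOf q')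
        (huOf3 q') (fun l i a b c => hrangeOf q' l i a b c) (L - 1) hLL w
      have hp : (0 < ((netW n L Aa (L - 1)).mulVec
            (reluHidden n (netW n L Aa) (netb n L Bb) (ι q) (L - 1)) + netb n L Bb (L - 1)) w) =
          (0 < ((netW n L Aa (L - 1)).mulVec
            (reluHidden n (netW n L Aa) (netb n L Bb) (ι q') (L - 1)) + netb n L Bb (L - 1)) w) :=
        congrFun (congrFun hpat ⟨L - 1, by omega⟩) w
      rw [h1, h2] at hp
      have e1 : ∀ i ∈ Finset.range (n 0), Aa (w : ℕ) i * uOf q (L - 1) i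
          = Aa m i * pt q.2 i := by
        intro i _
        rw [hulast q i]
      have e2 : ∀ i ∈ Finset.range (n 0), Aa (w : ℕ) i * uOf q' (L - 1) i
          = Aa m i * pt q'.2 i := by
        intro i _
        rw [hulast q' i]
      rw [Finset.sum_congr rfl e1, Finset.sum_congr rfl e2] at hp
      exact iff_of_eq hp
    have hcs : q.1 = q'.1 := by
      funext l i
      have hlayL : l.1 + 1 < L := by omega
      set P := Pl (l.1 + 1) with hPdef
      have hP1 : 1 ≤ P := hPl1 (l.1 + 1) (by omega) (by omega)
      -- preactivation formulas at layer l.1+1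
      have hf1 := net_pre_fold n L Aa Bb (uOf q) (cellsOf q) (ι q) hn0 hwidth (hxOf q)
        (huOf3 q) (fun a b c d e => hrangeOf q a b c d e) l.1 hlayL
      have hf2 := net_pre_fold n L Aa Bb (uOf q') (cellsOf q') (ι q') hn0 hwidth (hxOf q')
        (huOf3 q') (fun a b c d e => hrangeOf q' a b c d e) l.1 hlayL
      -- cells as cellsOf
      have hcq : cellsOf q (l.1 + 1) (i : ℕ) = (q.1 l i : ℕ) := by
        show (if h : l.1 + 1 - 1 < L - 1 ∧ (i : ℕ) < n 0
          then (q.1 ⟨l.1 + 1 - 1, h.1⟩ ⟨(i : ℕ), h.2⟩ : ℕ) else 0) = (q.1 l i : ℕ)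
        rw [dif_pos ⟨by omega, i.isLt⟩]
        rfl
      have hcq' : cellsOf q' (l.1 + 1) (i : ℕ) = (q'.1 l i : ℕ) := by
        show (if h : l.1 + 1 - 1 < L - 1 ∧ (i : ℕ) < n 0
          then (q'.1 ⟨l.1 + 1 - 1, h.1⟩ ⟨(i : ℕ), h.2⟩ : ℕ) else 0) = (q'.1 l i : ℕ)
        rw [dif_pos ⟨by omega, i.isLt⟩]
        rfl
      obtain ⟨b1, b2, b3, -⟩ := hu q (l.1 + 1) (i : ℕ) (by omega) hlayL i.isLt
      obtain ⟨c1, c2, c3, -⟩ := hu q' (l.1 + 1) (i : ℕ) (by omega) hlayL i.isLt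
      rw [Nat.add_sub_cancel] at b2 b3 c2 c3
      rw [hcq] at b1 b2 b3
      rw [hcq'] at c1 c2 c3
      -- generic step: pattern at unit j + i*P
      have hunit : ∀ j : ℕ, j < P → ∀ (hwlt : j + (i : ℕ) * P < n (l.1 + 1)),
          ((0 : ℝ) < ((P : ℕ) : ℝ) * uOf q l.1 (i : ℕ) - (j : ℝ)) ↔
          ((0 : ℝ) < ((P : ℕ) : ℝ) * uOf q' l.1 (i : ℕ) - (j : ℝ)) := by
        intro j hj hwlt
        set w : Fin (n (l.1 + 1)) := ⟨j + (i : ℕ) * P, hwlt⟩ with hwdef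
        have hwgrp : (w : ℕ) < n 0 * P := by
          show j + (i : ℕ) * P < n 0 * P
          have : ((i : ℕ) + 1) * P ≤ n 0 * P := Nat.mul_le_mul_right _ (by omega)
          calc j + (i : ℕ) * P < P + (i : ℕ) * P := by omega
          _ = ((i : ℕ) + 1) * P := by ring
          _ ≤ n 0 * P := this
        have hdiv : (w : ℕ) / P = (i : ℕ) := by
          show (j + (i : ℕ) * P) / P = (i : ℕ)
          rw [Nat.add_mul_div_right _ _ (by omega : 0 < P), Nat.div_eq_of_lt hj, zero_add]
        have hmod : (w : ℕ) % P = j := by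
          show (j + (i : ℕ) * P) % P = j
          rw [Nat.add_mul_mod_self_right, Nat.mod_eq_of_lt hj]
        have hp : (0 < ((netW n L Aa l.1).mulVec
              (reluHidden n (netW n L Aa) (netb n L Bb) (ι q) l.1) + netb n L Bb l.1) w) =
            (0 < ((netW n L Aa l.1).mulVec
              (reluHidden n (netW n L Aa) (netb n L Bb) (ι q') l.1) + netb n L Bb l.1) w) :=
          congrFun (congrFun hpat ⟨l.1, by omega⟩) w
        rw [hf1 w, hf2 w, if_pos hwgrp, hdiv, hmod, if_pos hwgrp] at hp
        exact iff_of_eq hp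
      -- use units at heights (q'.1 l i) and (q.1 l i)
      have hlt1 : (q'.1 l i : ℕ) + (i : ℕ) * P < n (l.1 + 1) := by
        have h1 : ((i : ℕ) + 1) * P ≤ n 0 * P := Nat.mul_le_mul_right _ (by omega)
        have h2 : n 0 * P ≤ n (l.1 + 1) := Nat.mul_div_le _ _
        have := c1
        calc (q'.1 l i : ℕ) + (i : ℕ) * P < P + (i : ℕ) * P := by omega
        _ = ((i : ℕ) + 1) * P := by ring
        _ ≤ n 0 * P := h1
        _ ≤ n (l.1 + 1) := h2
      have hlt2 : (q.1 l i : ℕ) + (i : ℕ) * P < n (l.1 + 1) := by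
        have h1 : ((i : ℕ) + 1) * P ≤ n 0 * P := Nat.mul_le_mul_right _ (by omega)
        have h2 : n 0 * P ≤ n (l.1 + 1) := Nat.mul_div_le _ _
        have := b1
        calc (q.1 l i : ℕ) + (i : ℕ) * P < P + (i : ℕ) * P := by omega
        _ = ((i : ℕ) + 1) * P := by ring
        _ ≤ n 0 * P := h1
        _ ≤ n (l.1 + 1) := h2
      have k1 := (hunit (q'.1 l i : ℕ) c1 hlt1).2 (by linarith)
      have k2 := (hunit (q.1 l i : ℕ) b1 hlt2).1 (by linarith)
      -- conclude equality
      apply Fin.ext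
      have hle1 : ((q'.1 l i : ℕ) : ℝ) < ((q.1 l i : ℕ) : ℝ) + 1 := by linarith
      have hle2 : ((q.1 l i : ℕ) : ℝ) < ((q'.1 l i : ℕ) : ℝ) + 1 := by linarith
      have : (q'.1 l i : ℕ) < (q.1 l i : ℕ) + 1 := by exact_mod_cast hle1
      have : (q.1 l i : ℕ) < (q'.1 l i : ℕ) + 1 := by exact_mod_cast hle2
      omega
    exact Prod.ext hcs ht
  -- count
  have hmain := region_count n (netW n L Aa) (netb n L Bb) L K ι hinj
  have hcardK : Fintype.card K =
      (∏ l ∈ Finset.Ico 1 L, Pl l ^ (n 0)) * Fintype.card T := by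
    rw [show Fintype.card K = Fintype.card
      (((l : Fin (L - 1)) → Fin (n 0) → Fin (Pl (l.1 + 1))) × T) from rfl,
      Fintype.card_prod]
    congr 1
    rw [Fintype.card_pi]
    calc ∏ l : Fin (L - 1), Fintype.card (Fin (n 0) → Fin (Pl (l.1 + 1)))
        = ∏ l : Fin (L - 1), (Pl (l.1 + 1)) ^ (n 0) := by
          apply Finset.prod_congr rfl
          intro l _
          rw [Fintype.card_fun, Fintype.card_fin, Fintype.card_fin]
      _ = ∏ m ∈ Finset.range (L - 1), (Pl (m + 1)) ^ (n 0) :=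
          Fin.prod_univ_eq_prod_range (fun m => Pl (m + 1) ^ (n 0)) (L - 1)
      _ = ∏ l ∈ Finset.Ico 1 L, (Pl l) ^ (n 0) := by
          rw [Finset.prod_Ico_eq_prod_range]
          apply Finset.prod_congr rfl
          intro m _
          rw [Nat.add_comm 1 m]
  rw [← hcard, ← hcardK]
  exact hmain
end

section
/- Let n_0 ≥ 1, L ≥ 1, and layer widths n_1,...,n_L with n_l ≥ n_0 for all l. For every L-layer ReLU feedforward network with input dimension n_0 and hidden widths n_1,...,n_L, the number of linear regions is at most ∑_{(j_1,...,j_L) ∈ J} ∏_{l=1}^{L} C(n_l, j_l), where J = {(j_1,...,j_L) ∈ ℤ^L : 0 ≤ j_l ≤ min{n_0, n_1 − j_1, ..., n_{l−1} − j_{l−1}, n_l} for all l = 1,...,L}. -/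
open Matrix

section Aux

open Function

variable {V : Type*} [AddCommGroup V] [Module ℝ V] [FiniteDimensional ℝ V]

noncomputable def affDim (s : Set V) : ℕ := Module.finrank ℝ (affineSpan ℝ s).direction

variable {ι : Type*}

/-- Sign patterns of the functionals `g i`, `i ∈ s`, realized on `D` (normalized to `false`
outside `s`). -/
def patOn (g : ι → V →ᵃ[ℝ] ℝ) (s : Finset ι) (D : Set V) : Set (ι → Bool) :=
  {σ | (∀ i ∉ s, σ i = false) ∧ ∃ x ∈ D, ∀ i ∈ s, σ i = decide (0 < g i x)}

lemma affDim_mono {s t : Set V} (h : s ⊆ t) : affDim s ≤ affDim t :=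
  Submodule.finrank_mono (AffineSubspace.direction_le (affineSpan_mono ℝ h))

lemma affDim_inter_lt (g : V →ᵃ[ℝ] ℝ) (D : Set V) {y z : V}
    (hy : y ∈ D) (hgy : 0 < g y) (hz : z ∈ D ∩ {x | g x = 0}) :
    affDim (D ∩ {x | g x = 0}) < affDim D := by
  set A := affineSpan ℝ (D ∩ {x | g x = 0}) with hA
  set B := affineSpan ℝ D with hB
  have hAle : A ≤ B := affineSpan_mono ℝ Set.inter_subset_left
  have hzero : ∀ w ∈ A, g w = 0 := by
    intro w hw
    have hsub : A ≤ AffineSubspace.comap g (AffineSubspace.mk' (0:ℝ) ⊥) := by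
      apply affineSpan_le.2
      intro u hu
      simp only [AffineSubspace.coe_comap, Set.mem_preimage, SetLike.mem_coe,
        AffineSubspace.mem_mk', Submodule.mem_bot, vsub_eq_sub, sub_zero]
      exact hu.2
    have := hsub hw
    simpa [AffineSubspace.mem_comap, AffineSubspace.mem_mk'] using this
  have hne : A ≠ B := by
    intro h
    have : y ∈ A := h ▸ subset_affineSpan ℝ D hy
    exact absurd (hzero y this) (ne_of_gt hgy)
  have hdirne : A.direction ≠ B.direction := by
    intro h
    exact hne (AffineSubspace.ext_of_direction_eq h
      ⟨z, subset_affineSpan ℝ _ hz, hAle (subset_affineSpan ℝ _ hz)⟩)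
  exact Submodule.finrank_lt_finrank_of_lt
    (lt_of_le_of_ne (AffineSubspace.direction_le hAle) hdirne)

lemma pat_region_convex (g : ι → V →ᵃ[ℝ] ℝ) (s : Finset ι) {D : Set V} (hD : Convex ℝ D)
    (σ : ι → Bool) : Convex ℝ {x | x ∈ D ∧ ∀ i ∈ s, σ i = decide (0 < g i x)} := by
  have he : {x | x ∈ D ∧ ∀ i ∈ s, σ i = decide (0 < g i x)}
      = D ∩ ⋂ i ∈ s, {x | σ i = decide (0 < g i x)} := by
    ext x; simp [Set.mem_iInter]
  rw [he]
  refine hD.inter (convex_iInter fun i => convex_iInter fun _ => ?_)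
  cases h : σ i with
  | true =>
    have he2 : {x : V | true = decide (0 < g i x)} = g i ⁻¹' Set.Ioi 0 := by
      ext x; simp [eq_comm, decide_eq_true_eq, Set.mem_Ioi]
    rw [he2]; exact (convex_Ioi (0:ℝ)).affine_preimage _
  | false =>
    have he2 : {x : V | false = decide (0 < g i x)} = g i ⁻¹' Set.Iic 0 := by
      ext x; simp [eq_comm, decide_eq_false_iff_not, not_lt, Set.mem_Iic]
    rw [he2]; exact (convex_Iic (0:ℝ)).affine_preimage _

theorem lemmaA [DecidableEq ι] (g : ι → V →ᵃ[ℝ] ℝ) (s : Finset ι) :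
    ∀ (D : Set V), Convex ℝ D →
    ∃ Φ : (ι → Bool) → Finset ι,
      (∀ σ ∈ patOn g s D, (↑(Φ σ) : Set ι) ⊆ {i | i ∈ s ∧ σ i = false} ∧ (Φ σ).card ≤ affDim D)
      ∧ Set.InjOn Φ (patOn g s D) := by
  classical
  induction s using Finset.induction_on with
  | empty =>
    intro D hD
    exact ⟨fun _ => ∅, fun σ hσ => ⟨by simp, by simp⟩, fun σ hσ τ hτ _ => by
      funext i; rw [hσ.1 i (by simp), hτ.1 i (by simp)]⟩
  | @insert a s ha ih =>
    intro D hD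
    obtain ⟨Φs, hΦs, hΦsinj⟩ := ih D hD
    have hH : Convex ℝ (D ∩ {x | g a x = 0}) :=
      hD.inter ((convex_singleton (0:ℝ)).affine_preimage (g a))
    obtain ⟨Φ', hΦ', hΦ'inj⟩ := ih (D ∩ {x | g a x = 0}) hH
    have trunc : ∀ σ ∈ patOn g (insert a s) D, update σ a false ∈ patOn g s D := by
      rintro σ ⟨hout, x, hxD, hx⟩
      refine ⟨?_, x, hxD, ?_⟩
      · intro i hi
        rcases eq_or_ne i a with rfl | hne
        · simp
        · rw [update_of_ne hne]; exact hout i (by simp [hne, hi])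
      · intro i hi
        rw [update_of_ne (by rintro rfl; exact ha hi)]
        exact hx i (Finset.mem_insert_of_mem hi)
    have both : ∀ σ ∈ patOn g (insert a s) D, σ a = false →
        update σ a true ∈ patOn g (insert a s) D →
        σ ∈ patOn g s (D ∩ {x | g a x = 0}) ∧
          affDim (D ∩ {x | g a x = 0}) + 1 ≤ affDim D := by
      rintro σ ⟨hout, x, hxD, hx⟩ hσa ⟨hout', y, hyD, hy⟩
      have hRconv := pat_region_convex g s hD σ
      have hxR : x ∈ {w | w ∈ D ∧ ∀ i ∈ s, σ i = decide (0 < g i w)} :=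
        ⟨hxD, fun i hi => hx i (Finset.mem_insert_of_mem hi)⟩
      have hyR : y ∈ {w | w ∈ D ∧ ∀ i ∈ s, σ i = decide (0 < g i w)} := by
        refine ⟨hyD, fun i hi => ?_⟩
        have := hy i (Finset.mem_insert_of_mem hi)
        rwa [update_of_ne (by rintro rfl; exact ha hi)] at this
      have hu : g a x ≤ 0 := by
        have h1 := hx a (Finset.mem_insert_self a s)
        rw [hσa] at h1
        exact not_lt.1 (by simpa [eq_comm, decide_eq_false_iff_not] using h1)
      have hv : 0 < g a y := by
        have h1 := hy a (Finset.mem_insert_self a s)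
        rw [update_self] at h1
        simpa [eq_comm, decide_eq_true_eq] using h1
      have hvu : (0:ℝ) < g a y - g a x := by linarith
      set t : ℝ := -(g a x) / (g a y - g a x) with ht
      have ht0 : 0 ≤ t := div_nonneg (by linarith) (le_of_lt hvu)
      have ht1 : t ≤ 1 := by rw [div_le_one hvu]; linarith
      set z := (1 - t) • x + t • y with hzdef
      have hzR : z ∈ {w | w ∈ D ∧ ∀ i ∈ s, σ i = decide (0 < g i w)} :=
        hRconv hxR hyR (by linarith) ht0 (by ring)
      have hgz : g a z = 0 := by
        have hzl : z = AffineMap.lineMap x y t := by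
          rw [AffineMap.lineMap_apply_module]
        rw [hzl, AffineMap.apply_lineMap, AffineMap.lineMap_apply_module, smul_eq_mul,
          smul_eq_mul, ht]
        field_simp
        ring
      have hzD : z ∈ D ∩ {w | g a w = 0} := ⟨hzR.1, hgz⟩
      constructor
      · refine ⟨?_, z, hzD, fun i hi => hzR.2 i hi⟩
        intro i hi
        rcases eq_or_ne i a with rfl | hne
        · exact hσa
        · exact hout i (by simp [hne, hi])
      · exact affDim_inter_lt (g a) D hyD hv hzD
    set Φ : (ι → Bool) → Finset ι := fun σ =>
      if σ a = true then Φs (update σ a false)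
      else if update σ a true ∈ patOn g (insert a s) D then insert a (Φ' σ)
      else Φs σ with hΦdef
    have Φdef1 : ∀ σ, σ a = true → Φ σ = Φs (update σ a false) := by
      intro σ h; simp [hΦdef, h]
    have Φdef3 : ∀ σ, σ a = false → update σ a true ∈ patOn g (insert a s) D →
        Φ σ = insert a (Φ' σ) := by
      intro σ h h2; simp [hΦdef, h, h2]
    have Φdef2 : ∀ σ, σ a = false → update σ a true ∉ patOn g (insert a s) D →
        Φ σ = Φs σ := by
      intro σ h h2; simp [hΦdef, h, h2]
    have haΦs : ∀ π ∈ patOn g s D, a ∉ Φs π := by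
      intro π hπ hmem
      exact ha ((hΦs π hπ).1 hmem).1
    have haΦ' : ∀ π ∈ patOn g s (D ∩ {x | g a x = 0}), a ∉ Φ' π := by
      intro π hπ hmem
      exact ha ((hΦ' π hπ).1 hmem).1
    have self2 : ∀ σ : ι → Bool, σ a = false → update σ a false = σ := by
      intro σ h; rw [← h]; exact update_eq_self a σ
    refine ⟨Φ, ?_, ?_⟩
    · intro σ hσ
      by_cases h1 : σ a = true
      · rw [Φdef1 σ h1]
        have hmem := trunc σ hσ
        obtain ⟨hsub, hcard⟩ := hΦs _ hmem
        refine ⟨?_, hcard⟩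
        intro i hi
        obtain ⟨his, hif⟩ := hsub hi
        have hia : i ≠ a := fun h => ha (h ▸ his)
        rw [update_of_ne hia] at hif
        exact ⟨Finset.mem_insert_of_mem his, hif⟩
      · rw [Bool.not_eq_true] at h1
        by_cases h2 : update σ a true ∈ patOn g (insert a s) D
        · rw [Φdef3 σ h1 h2]
          obtain ⟨hmem, hdim⟩ := both σ hσ h1 h2
          obtain ⟨hsub, hcard⟩ := hΦ' _ hmem
          constructor
          · intro i hi
            rcases Finset.mem_insert.1 hi with rfl | hi'
            · exact ⟨Finset.mem_insert_self _ _, h1⟩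
            · obtain ⟨his, hif⟩ := hsub hi'
              exact ⟨Finset.mem_insert_of_mem his, hif⟩
          · calc (insert a (Φ' σ)).card ≤ (Φ' σ).card + 1 := Finset.card_insert_le _ _
              _ ≤ affDim (D ∩ {x | g a x = 0}) + 1 := by omega
              _ ≤ affDim D := hdim
        · rw [Φdef2 σ h1 h2]
          have hmem : σ ∈ patOn g s D := by
            have := trunc σ hσ; rwa [self2 σ h1] at this
          obtain ⟨hsub, hcard⟩ := hΦs _ hmem
          refine ⟨?_, hcard⟩
          intro i hi
          obtain ⟨his, hif⟩ := hsub hi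
          exact ⟨Finset.mem_insert_of_mem his, hif⟩
    · intro σ hσ τ hτ heq
      have hrec : ∀ ρ : ι → Bool, ρ a = true → ρ = update (update ρ a false) a true := by
        intro ρ h; funext i
        rcases eq_or_ne i a with rfl | hne
        · rw [update_self]; exact h
        · rw [update_of_ne hne, update_of_ne hne]
      by_cases h1σ : σ a = true
      · by_cases h1τ : τ a = true
        · rw [Φdef1 σ h1σ, Φdef1 τ h1τ] at heq
          have := hΦsinj (trunc σ hσ) (trunc τ hτ) heq
          rw [hrec σ h1σ, hrec τ h1τ, this]
        · rw [Bool.not_eq_true] at h1τ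
          by_cases h2τ : update τ a true ∈ patOn g (insert a s) D
          · rw [Φdef1 σ h1σ, Φdef3 τ h1τ h2τ] at heq
            exact absurd (heq ▸ Finset.mem_insert_self a (Φ' τ))
              (haΦs _ (trunc σ hσ))
          · rw [Φdef1 σ h1σ, Φdef2 τ h1τ h2τ] at heq
            have hmemτ : τ ∈ patOn g s D := by
              have := trunc τ hτ; rwa [self2 τ h1τ] at this
            have heq2 := hΦsinj (trunc σ hσ) hmemτ heq
            exfalso; apply h2τ
            rw [← heq2, ← hrec σ h1σ]
            exact hσ
      · rw [Bool.not_eq_true] at h1σ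
        by_cases h2σ : update σ a true ∈ patOn g (insert a s) D
        · by_cases h1τ : τ a = true
          · rw [Φdef3 σ h1σ h2σ, Φdef1 τ h1τ] at heq
            exact absurd (heq ▸ Finset.mem_insert_self a (Φ' σ))
              (haΦs _ (trunc τ hτ))
          · rw [Bool.not_eq_true] at h1τ
            by_cases h2τ : update τ a true ∈ patOn g (insert a s) D
            · rw [Φdef3 σ h1σ h2σ, Φdef3 τ h1τ h2τ] at heq
              obtain ⟨hmemσ, _⟩ := both σ hσ h1σ h2σ
              obtain ⟨hmemτ, _⟩ := both τ hτ h1τ h2τ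
              have hΦ'eq : Φ' σ = Φ' τ := by
                have h3 := congrArg (fun u => Finset.erase u a) heq
                simpa [Finset.erase_insert (haΦ' _ hmemσ),
                  Finset.erase_insert (haΦ' _ hmemτ)] using h3
              exact hΦ'inj hmemσ hmemτ hΦ'eq
            · rw [Φdef3 σ h1σ h2σ, Φdef2 τ h1τ h2τ] at heq
              have hmemτ : τ ∈ patOn g s D := by
                have := trunc τ hτ; rwa [self2 τ h1τ] at this
              exact absurd (heq ▸ Finset.mem_insert_self a (Φ' σ))
                (haΦs _ hmemτ)
        · by_cases h1τ : τ a = true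
          · rw [Φdef2 σ h1σ h2σ, Φdef1 τ h1τ] at heq
            have hmemσ : σ ∈ patOn g s D := by
              have := trunc σ hσ; rwa [self2 σ h1σ] at this
            have heq2 := hΦsinj hmemσ (trunc τ hτ) heq
            exfalso; apply h2σ
            rw [heq2, ← hrec τ h1τ]
            exact hτ
          · rw [Bool.not_eq_true] at h1τ
            by_cases h2τ : update τ a true ∈ patOn g (insert a s) D
            · rw [Φdef2 σ h1σ h2σ, Φdef3 τ h1τ h2τ] at heq
              have hmemσ : σ ∈ patOn g s D := by
                have := trunc σ hσ; rwa [self2 σ h1σ] at this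
              exact absurd (heq.symm ▸ Finset.mem_insert_self a (Φ' τ))
                (haΦs _ hmemσ)
            · rw [Φdef2 σ h1σ h2σ, Φdef2 τ h1τ h2τ] at heq
              have hmemσ : σ ∈ patOn g s D := by
                have := trunc σ hσ; rwa [self2 σ h1σ] at this
              have hmemτ : τ ∈ patOn g s D := by
                have := trunc τ hτ; rwa [self2 τ h1τ] at this
              exact hΦsinj hmemσ hmemτ heq


open Matrix Function

section AffHelpers

variable {V W' : Type*} [AddCommGroup V] [Module ℝ V] [AddCommGroup W'] [Module ℝ W']

/-- Affine map from a linear map and a constant. -/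
def affOf (ℓ : V →ₗ[ℝ] W') (c : W') : V →ᵃ[ℝ] W' where
  toFun := fun v => ℓ v + c
  linear := ℓ
  map_vadd' := by intro p v; simp [map_add, vadd_eq_add]; abel

@[simp] lemma affOf_apply (ℓ : V →ₗ[ℝ] W') (c : W') (v : V) : affOf ℓ c v = ℓ v + c := rfl

end AffHelpers

/-- Coordinate masking linear map. -/
noncomputable def maskLin {k : ℕ} (c : Fin k → Bool) : (Fin k → ℝ) →ₗ[ℝ] (Fin k → ℝ) :=
  LinearMap.pi (fun j => if c j then LinearMap.proj j else 0)

lemma maskLin_apply {k : ℕ} (c : Fin k → Bool) (v : Fin k → ℝ) (j : Fin k) :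
    maskLin c v j = if c j then v j else 0 := by
  unfold maskLin
  rw [LinearMap.pi_apply]
  by_cases h : c j <;> simp [h]

variable (n : ℕ → ℕ)
    (W : (l : ℕ) → Matrix (Fin (n (l + 1))) (Fin (n l)) ℝ)
    (b : (l : ℕ) → Fin (n (l + 1)) → ℝ)

/-- One masked affine layer. -/
noncomputable def stepAff (l : ℕ) (c : Fin (n (l+1)) → Bool) :
    (Fin (n l) → ℝ) →ᵃ[ℝ] (Fin (n (l+1)) → ℝ) :=
  affOf ((maskLin c).comp (W l).mulVecLin) (maskLin c (b l))

lemma stepAff_apply (l : ℕ) (c : Fin (n (l+1)) → Bool) (v : Fin (n l) → ℝ) (j : Fin (n (l+1))) :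
    stepAff n W b l c v j = if c j then ((W l) *ᵥ v + b l) j else 0 := by
  simp only [stepAff, affOf_apply, LinearMap.comp_apply, Pi.add_apply, maskLin_apply,
    Matrix.mulVecLin_apply]
  by_cases h : c j <;> simp [h]

/-- Pattern-determined affine maps through the layers. -/
noncomputable def netAff (q : (m : ℕ) → Fin (n (m+1)) → Bool) :
    (l : ℕ) → ((Fin (n 0) → ℝ) →ᵃ[ℝ] (Fin (n l) → ℝ))
  | 0 => AffineMap.id ℝ _
  | l+1 => (stepAff n W b l (q l)).comp (netAff q l)

/-- Boolean activation pattern of hidden layer `l` (0-indexed). -/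
noncomputable def pattB (x : Fin (n 0) → ℝ) (m : ℕ) : Fin (n (m+1)) → Bool :=
  fun j => decide (0 < ((W m) *ᵥ (reluHidden n W b x m) + b m) j)

/-- Region of inputs whose pattern agrees with `q` on the first `l` hidden layers. -/
noncomputable def Reg (l : ℕ) (q : (m : ℕ) → Fin (n (m+1)) → Bool) : Set (Fin (n 0) → ℝ) :=
  {x | ∀ m, m < l → pattB n W b x m = q m}

lemma Reg_mono {l l' : ℕ} (h : l ≤ l') (q : (m : ℕ) → Fin (n (m+1)) → Bool) :
    Reg n W b l' q ⊆ Reg n W b l q := fun x hx m hm => hx m (lt_of_lt_of_le hm h)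

lemma netAff_congr {q q' : (m : ℕ) → Fin (n (m+1)) → Bool} :
    ∀ l, (∀ m, m < l → q m = q' m) → netAff n W b q l = netAff n W b q' l := by
  intro l
  induction l with
  | zero => intro _; rfl
  | succ l ih =>
    intro h
    show (stepAff n W b l (q l)).comp (netAff n W b q l)
        = (stepAff n W b l (q' l)).comp (netAff n W b q' l)
    rw [ih (fun m hm => h m (by omega)), h l (by omega)]

lemma Reg_congr {q q' : (m : ℕ) → Fin (n (m+1)) → Bool} (l : ℕ)
    (h : ∀ m, m < l → q m = q' m) : Reg n W b l q = Reg n W b l q' := by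
  ext x
  constructor <;> intro hx m hm
  · rw [← h m hm]; exact hx m hm
  · rw [h m hm]; exact hx m hm

lemma reluHidden_eq_affine (q : (m : ℕ) → Fin (n (m+1)) → Bool) :
    ∀ l, ∀ x ∈ Reg n W b l q, reluHidden n W b x l = netAff n W b q l x := by
  intro l
  induction l with
  | zero => intro x _; rfl
  | succ l ih =>
    intro x hx
    have hx' : x ∈ Reg n W b l q := Reg_mono n W b (Nat.le_succ l) q hx
    funext j
    have hpre := congrFun (hx l (Nat.lt_succ_self l)) j
    show max (((W l) *ᵥ (reluHidden n W b x l) + b l) j) 0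
        = stepAff n W b l (q l) (netAff n W b q l x) j
    rw [stepAff_apply, ← ih x hx']
    by_cases hpos : 0 < ((W l) *ᵥ (reluHidden n W b x l) + b l) j
    · have hq : q l j = true := by
        rw [← hpre]; simp only [pattB, decide_eq_true_eq]; exact hpos
      rw [hq, if_pos rfl, max_eq_left hpos.le]
    · have hq : q l j = false := by
        rw [← hpre]; simp only [pattB, decide_eq_false_iff_not]; exact hpos
      rw [hq, if_neg (by simp), max_eq_right (not_lt.1 hpos)]

lemma Reg_eq_affine (l : ℕ) (q : (m : ℕ) → Fin (n (m+1)) → Bool) :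
    Reg n W b l q
      = {x | ∀ m, m < l → ∀ j, q m j = decide (0 < ((W m) *ᵥ (netAff n W b q m x) + b m) j)} := by
  ext x
  constructor
  · intro hx m hm j
    have hx' : x ∈ Reg n W b m q := Reg_mono n W b hm.le q hx
    rw [← reluHidden_eq_affine n W b q m x hx', ← congrFun (hx m hm) j]
    rfl
  · intro hx
    have key : ∀ m, m ≤ l → x ∈ Reg n W b m q := by
      intro m
      induction m with
      | zero => intro _ m' hm'; omega
      | succ m ih =>
        intro hm
        have hxm : x ∈ Reg n W b m q := ih (by omega)
        intro m' hm'
        rcases Nat.lt_succ_iff_lt_or_eq.1 hm' with h | rfl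
        · exact hxm m' h
        · funext j
          rw [show pattB n W b x m' j
              = decide (0 < ((W m') *ᵥ (reluHidden n W b x m') + b m') j) from rfl,
            reluHidden_eq_affine n W b q m' x hxm]
          exact (hx m' (by omega) j).symm
    exact key l le_rfl

lemma Reg_convex (l : ℕ) (q : (m : ℕ) → Fin (n (m+1)) → Bool) :
    Convex ℝ (Reg n W b l q) := by
  rw [Reg_eq_affine]
  have he : {x | ∀ m, m < l → ∀ j, q m j
        = decide (0 < ((W m) *ᵥ (netAff n W b q m x) + b m) j)}
      = ⋂ m, ⋂ (_ : m < l), ⋂ j,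
          {x | q m j = decide (0 < ((W m) *ᵥ (netAff n W b q m x) + b m) j)} := by
    ext x; simp only [Set.mem_iInter, Set.mem_setOf_eq]
  rw [he]
  refine convex_iInter fun m => convex_iInter fun _ => convex_iInter fun j => ?_
  set φ : (Fin (n 0) → ℝ) →ᵃ[ℝ] ℝ :=
    (affOf ((LinearMap.proj j).comp (W m).mulVecLin) (b m j)).comp (netAff n W b q m) with hφ
  have hval : ∀ x, ((W m) *ᵥ (netAff n W b q m x)) j + b m j = φ x := by
    intro x; simp [hφ, affOf_apply]
  cases h : q m j with
  | true =>
    have he2 : {x | true = decide (0 < ((W m) *ᵥ (netAff n W b q m x) + b m) j)}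
        = φ ⁻¹' Set.Ioi 0 := by
      ext x; simp [eq_comm, decide_eq_true_eq, Set.mem_Ioi, hval x]
    rw [he2]; exact (convex_Ioi (0:ℝ)).affine_preimage _
  | false =>
    have he2 : {x | false = decide (0 < ((W m) *ᵥ (netAff n W b q m x) + b m) j)}
        = φ ⁻¹' Set.Iic 0 := by
      ext x; simp [eq_comm, decide_eq_false_iff_not, not_lt, Set.mem_Iic, hval x]
    rw [he2]; exact (convex_Iic (0:ℝ)).affine_preimage _


section DimLemmas

variable {V W' : Type*} [AddCommGroup V] [Module ℝ V] [FiniteDimensional ℝ V]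
  [AddCommGroup W'] [Module ℝ W']

lemma affDim_le_finrank (s : Set V) : affDim s ≤ Module.finrank ℝ V :=
  Submodule.finrank_le _

lemma affDim_image_le (f : V →ᵃ[ℝ] W') (s : Set V) : affDim (f '' s) ≤ affDim s := by
  unfold affDim
  rw [← AffineSubspace.map_span, AffineSubspace.map_direction]
  exact Submodule.finrank_map_le _ _

end DimLemmas

lemma finrank_zeroSet {N : ℕ} (S : Finset (Fin N)) :
    Module.finrank ℝ ↥(LinearMap.ker (LinearMap.pi (fun j : {j // j ∈ S} =>
      (LinearMap.proj j.1 : (Fin N → ℝ) →ₗ[ℝ] ℝ)))) = N - S.card := by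
  set T := LinearMap.pi (fun j : {j // j ∈ S} =>
    (LinearMap.proj j.1 : (Fin N → ℝ) →ₗ[ℝ] ℝ)) with hT
  have hsurj : Function.Surjective T := by
    intro w
    refine ⟨fun i => if h : i ∈ S then w ⟨i, h⟩ else 0, ?_⟩
    funext j
    rw [hT, LinearMap.pi_apply, LinearMap.proj_apply]
    simp [j.2]
  have hrange : LinearMap.range T = ⊤ := LinearMap.range_eq_top.2 hsurj
  have h1 := LinearMap.finrank_range_add_finrank_ker T
  rw [hrange, finrank_top] at h1
  have h2 : Module.finrank ℝ ({j // j ∈ S} → ℝ) = S.card := by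
    rw [Module.finrank_pi]; exact Fintype.card_coe S
  have h3 : Module.finrank ℝ (Fin N → ℝ) = N := by
    rw [Module.finrank_pi]; exact Fintype.card_fin N
  omega

lemma affDim_zeroSet_le {N : ℕ} (S : Finset (Fin N)) (s : Set (Fin N → ℝ))
    (h : ∀ v ∈ s, ∀ j ∈ S, v j = 0) : affDim s ≤ N - S.card := by
  set K := LinearMap.ker (LinearMap.pi (fun j : {j // j ∈ S} =>
    (LinearMap.proj j.1 : (Fin N → ℝ) →ₗ[ℝ] ℝ))) with hK
  have hmem : ∀ v ∈ s, v ∈ K := by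
    intro v hv
    rw [hK, LinearMap.mem_ker]
    funext j
    rw [LinearMap.pi_apply, LinearMap.proj_apply]
    exact (h v hv j.1 j.2).trans rfl
  have hle : affineSpan ℝ s ≤ K.toAffineSubspace :=
    affineSpan_le.2 (fun v hv => Submodule.mem_toAffineSubspace.2 (hmem v hv))
  have hdir : (affineSpan ℝ s).direction ≤ K := by
    have := AffineSubspace.direction_le hle
    rwa [Submodule.toAffineSubspace_direction] at this
  exact le_trans (Submodule.finrank_mono hdir) (le_of_eq (finrank_zeroSet S))

variable (n : ℕ → ℕ)
    (W : (l : ℕ) → Matrix (Fin (n (l + 1))) (Fin (n l)) ℝ)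
    (b : (l : ℕ) → Fin (n (l + 1)) → ℝ)

/-- Image of the region under the pattern-affine map. -/
noncomputable def netD (l : ℕ) (q : (m : ℕ) → Fin (n (m+1)) → Bool) : Set (Fin (n l) → ℝ) :=
  netAff n W b q l '' Reg n W b l q

lemma netD_convex (l : ℕ) (q : (m : ℕ) → Fin (n (m+1)) → Bool) :
    Convex ℝ (netD n W b l q) := (Reg_convex n W b l q).affine_image _

lemma affDim_netD_zero (q : (m : ℕ) → Fin (n (m+1)) → Bool) :
    affDim (netD n W b 0 q) ≤ n 0 := by
  refine le_trans (affDim_le_finrank _) (le_of_eq ?_)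
  rw [Module.finrank_pi]; exact Fintype.card_fin _

lemma affDim_netD_succ_le (l : ℕ) (q : (m : ℕ) → Fin (n (m+1)) → Bool) :
    affDim (netD n W b (l+1) q) ≤ affDim (netD n W b l q) := by
  have hsub : netD n W b (l+1) q ⊆ (stepAff n W b l (q l)) '' (netD n W b l q) := by
    rintro v ⟨x, hx, rfl⟩
    exact ⟨netAff n W b q l x, ⟨x, Reg_mono n W b (Nat.le_succ l) q hx, rfl⟩, rfl⟩
  exact le_trans (affDim_mono hsub) (affDim_image_le _ _)

lemma affDim_netD_succ_zero (l : ℕ) (q : (m : ℕ) → Fin (n (m+1)) → Bool)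
    (S : Finset (Fin (n (l+1)))) (hS : ∀ j ∈ S, q l j = false) :
    affDim (netD n W b (l+1) q) ≤ n (l+1) - S.card := by
  apply affDim_zeroSet_le
  rintro v ⟨x, _, rfl⟩ j hj
  show netAff n W b q (l+1) x j = 0
  have he : netAff n W b q (l+1) x j
      = if q l j then ((W l) *ᵥ (netAff n W b q l x) + b l) j else 0 :=
    stepAff_apply n W b l (q l) (netAff n W b q l x) j
  rw [he, hS j hj]
  simp

/-- Realized, normalized patterns for the first `l` layers. -/
def RealNorm (l : ℕ) : Set ((m : ℕ) → Fin (n (m+1)) → Bool) :=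
  {q | (∀ m, l ≤ m → q m = fun _ => false) ∧ (Reg n W b l q).Nonempty}

theorem mainInd : ∀ l : ℕ,
    ∃ Ψ : ((m : ℕ) → Fin (n (m+1)) → Bool) → ((m : ℕ) → Finset (Fin (n (m+1)))),
      (∀ q ∈ RealNorm n W b l,
        (∀ m, l ≤ m → Ψ q m = ∅) ∧
        (∀ m, m < l → (Ψ q m).card ≤ n 0 ∧
          ∀ m', m' < m → (Ψ q m).card ≤ n (m'+1) - (Ψ q m').card) ∧
        (affDim (netD n W b l q) ≤ n 0 ∧
          ∀ m, m < l → affDim (netD n W b l q) ≤ n (m+1) - (Ψ q m).card)) ∧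
      Set.InjOn Ψ (RealNorm n W b l) := by
  intro l
  induction l with
  | zero =>
    refine ⟨fun _ _ => ∅, ?_, ?_⟩
    · intro q _
      exact ⟨fun m _ => rfl, fun m hm => absurd hm (Nat.not_lt_zero m),
        affDim_netD_zero n W b q, fun m hm => absurd hm (Nat.not_lt_zero m)⟩
    · intro q hq q' hq' _
      funext m
      rw [hq.1 m (Nat.zero_le m), hq'.1 m (Nat.zero_le m)]
  | succ l ih =>
    classical
    obtain ⟨Ψl, hΨ, hinj⟩ := ih
    set g : Fin (n (l+1)) → ((Fin (n l) → ℝ) →ᵃ[ℝ] ℝ) :=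
      fun j => affOf ((LinearMap.proj j).comp (W l).mulVecLin) (b l j) with hg
    have hA : ∀ q', ∃ Φ : (Fin (n (l+1)) → Bool) → Finset (Fin (n (l+1))),
        (∀ σ ∈ patOn g Finset.univ (netD n W b l q'),
          (↑(Φ σ) : Set (Fin (n (l+1)))) ⊆ {i | i ∈ Finset.univ ∧ σ i = false} ∧
            (Φ σ).card ≤ affDim (netD n W b l q')) ∧
        Set.InjOn Φ (patOn g Finset.univ (netD n W b l q')) :=
      fun q' => lemmaA g Finset.univ (netD n W b l q') (netD_convex n W b l q')
    choose A hA1 hA2 using hA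
    set tr : ((m : ℕ) → Fin (n (m+1)) → Bool) → ((m : ℕ) → Fin (n (m+1)) → Bool) :=
      fun q m => if m < l then q m else fun _ => false with htr
    have htr_lt : ∀ q m, m < l → tr q m = q m := fun q m hm => by simp [htr, hm]
    have htr_ge : ∀ q m, l ≤ m → tr q m = fun _ => false :=
      fun q m hm => by simp [htr, Nat.not_lt.2 hm]
    have hRegtr : ∀ q, Reg n W b l (tr q) = Reg n W b l q :=
      fun q => Reg_congr n W b l (fun m hm => htr_lt q m hm)
    have hAfftr : ∀ q, netAff n W b (tr q) l = netAff n W b q l :=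
      fun q => netAff_congr n W b l (fun m hm => htr_lt q m hm)
    have hDtr : ∀ q, netD n W b l (tr q) = netD n W b l q := by
      intro q; unfold netD; rw [hRegtr q, hAfftr q]
    have htrmem : ∀ q ∈ RealNorm n W b (l+1), tr q ∈ RealNorm n W b l := by
      rintro q ⟨_, x, hx⟩
      exact ⟨fun m hm => htr_ge q m hm,
        by rw [hRegtr]; exact ⟨x, Reg_mono n W b (Nat.le_succ l) q hx⟩⟩
    have hpat : ∀ q ∈ RealNorm n W b (l+1),
        q l ∈ patOn g Finset.univ (netD n W b l (tr q)) := by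
      rintro q ⟨_, x, hx⟩
      have hx' : x ∈ Reg n W b l q := Reg_mono n W b (Nat.le_succ l) q hx
      refine ⟨fun i hi => absurd (Finset.mem_univ i) hi, netAff n W b q l x, ?_, ?_⟩
      · rw [hDtr]; exact ⟨x, hx', rfl⟩
      · intro j _
        have h1 := congrFun (hx l (Nat.lt_succ_self l)) j
        rw [← h1]
        simp only [pattB, hg, affOf_apply]
        rw [← reluHidden_eq_affine n W b q l x hx']
        simp [Matrix.mulVecLin_apply]
        exact decide_eq_decide.2 Iff.rfl
    set Ψ' : ((m : ℕ) → Fin (n (m+1)) → Bool) → ((m : ℕ) → Finset (Fin (n (m+1)))) :=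
      fun q => Function.update (Ψl (tr q)) l (A (tr q) (q l)) with hΨ'def
    refine ⟨Ψ', ?_, ?_⟩
    · intro q hq
      have htrq := htrmem q hq
      obtain ⟨hΨ1, hΨ2, hΨ3, hΨ4⟩ := hΨ (tr q) htrq
      have hAcard : (A (tr q) (q l)).card ≤ affDim (netD n W b l (tr q)) :=
        (hA1 (tr q) (q l) (hpat q hq)).2
      have hAsub : ∀ j ∈ A (tr q) (q l), q l j = false :=
        fun j hj => ((hA1 (tr q) (q l) (hpat q hq)).1 hj).2
      refine ⟨?_, ?_, ?_, ?_⟩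
      · intro m hm
        simp only [hΨ'def]
        rw [Function.update_of_ne (show m ≠ l by omega)]
        exact hΨ1 m (by omega)
      · intro m hm
        simp only [hΨ'def]
        rcases Nat.lt_succ_iff_lt_or_eq.1 hm with h | rfl
        · rw [Function.update_of_ne (show m ≠ l by omega)]
          refine ⟨(hΨ2 m h).1, ?_⟩
          intro m' hm'
          rw [Function.update_of_ne (show m' ≠ l by omega)]
          exact (hΨ2 m h).2 m' hm'
        · rw [Function.update_self]
          refine ⟨le_trans hAcard hΨ3, ?_⟩
          intro m' hm'
          rw [Function.update_of_ne (show m' ≠ m by omega)]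
          exact le_trans hAcard (hΨ4 m' hm')
      · calc affDim (netD n W b (l+1) q) ≤ affDim (netD n W b l q) :=
              affDim_netD_succ_le n W b l q
          _ = affDim (netD n W b l (tr q)) := by rw [hDtr]
          _ ≤ n 0 := hΨ3
      · intro m hm
        simp only [hΨ'def]
        rcases Nat.lt_succ_iff_lt_or_eq.1 hm with h | rfl
        · rw [Function.update_of_ne (show m ≠ l by omega)]
          calc affDim (netD n W b (l+1) q) ≤ affDim (netD n W b l q) :=
                affDim_netD_succ_le n W b l q
            _ = affDim (netD n W b l (tr q)) := by rw [hDtr]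
            _ ≤ n (m+1) - (Ψl (tr q) m).card := hΨ4 m h
        · rw [Function.update_self]
          exact affDim_netD_succ_zero n W b m q (A (tr q) (q m)) hAsub
    · intro q hq q' hq' h
      have htrq := htrmem q hq
      have htrq' := htrmem q' hq'
      have h1 : Ψl (tr q) = Ψl (tr q') := by
        funext m
        rcases eq_or_ne m l with rfl | hne
        · rw [(hΨ (tr q) htrq).1 m le_rfl, (hΨ (tr q') htrq').1 m le_rfl]
        · have hc := congrFun h m
          simp only [hΨ'def] at hc
          rwa [Function.update_of_ne hne, Function.update_of_ne hne] at hc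
      have h2 : tr q = tr q' := hinj htrq htrq' h1
      have h3 : A (tr q) (q l) = A (tr q) (q' l) := by
        have hc := congrFun h l
        simp only [hΨ'def] at hc
        rw [Function.update_self, Function.update_self] at hc
        rw [h2]; rw [h2] at hc; exact hc
      have h4 : q l = q' l := by
        refine hA2 (tr q) (hpat q hq) ?_ h3
        rw [h2]; exact hpat q' hq'
      funext m j
      rcases lt_trichotomy m l with hm | rfl | hm
      · have := congrFun (congrFun h2 m) j
        rwa [htr_lt q m hm, htr_lt q' m hm] at this
      · exact congrFun h4 j
      · rw [hq.1 m (by omega), hq'.1 m (by omega)]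

end Aux

open Classical in
/-- For `n_0 ≥ 1`, `L ≥ 1` and hidden widths `n_l ≥ n_0`, every `L`-layer ReLU
network has at most `∑_{(j_1,…,j_L) ∈ J} ∏_{l=1}^L C(n_l, j_l)` linear regions, where
`J = {(j_1,…,j_L) ∈ ℤ^L : 0 ≤ j_l ≤ min{n_0, n_1 − j_1, …, n_{l−1} − j_{l−1}, n_l}}`.
(Here `j` is indexed by `l : Fin L`, with `j l` playing the role of `j_{l+1}`, and the bounds
`0 ≤ j_l ≤ n_l` are built into the type `Fin (n_l + 1)`.) -/
theorem relu_regions_upper_bound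
    (L : ℕ) (hL : 1 ≤ L) (n : ℕ → ℕ) (hn0 : 1 ≤ n 0)
    (hwidth : ∀ l, 1 ≤ l → l ≤ L → n 0 ≤ n l)
    (W : (l : ℕ) → Matrix (Fin (n (l + 1))) (Fin (n l)) ℝ)
    (b : (l : ℕ) → Fin (n (l + 1)) → ℝ) :
    (linearRegions n W b L).ncard ≤
      ∑ j ∈ (Finset.univ : Finset ((l : Fin L) → Fin (n (l.1 + 1) + 1))).filter
          (fun j => ∀ l : Fin L, (j l : ℕ) ≤ n 0 ∧
            ∀ m : Fin L, m < l → (j l : ℕ) ≤ n (m.1 + 1) - (j m : ℕ)),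
        ∏ l : Fin L, (n (l.1 + 1)).choose (j l : ℕ) := by
  classical
  obtain ⟨Ψ, hΨ, hΨinj⟩ := mainInd n W b L
  set q0 : (Fin (n 0) → ℝ) → ((m : ℕ) → Fin (n (m+1)) → Bool) :=
    fun x m => if m < L then pattB n W b x m else fun _ => false with hq0
  have hq0lt : ∀ x m, m < L → q0 x m = pattB n W b x m := fun x m hm => by simp [hq0, hm]
  have hq0ge : ∀ x m, L ≤ m → q0 x m = fun _ => false :=
    fun x m hm => by simp [hq0, Nat.not_lt.2 hm]
  have hxmem : ∀ x, x ∈ Reg n W b L (q0 x) := fun x m hm => (hq0lt x m hm).symm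
  have hq0mem : ∀ x, q0 x ∈ RealNorm n W b L :=
    fun x => ⟨fun m hm => hq0ge x m hm, ⟨x, hxmem x⟩⟩
  have hlevel : ∀ x, {y | reluPattern n W b L y = reluPattern n W b L x}
      = Reg n W b L (q0 x) := by
    intro x
    ext y
    simp only [Set.mem_setOf_eq]
    constructor
    · intro h m hm
      funext j
      have h1 := congrFun (congrFun h ⟨m, hm⟩) j
      simp only [reluPattern] at h1
      rw [hq0lt x m hm]
      simp only [pattB]
      exact decide_eq_decide.2 (iff_of_eq h1)
    · intro h
      funext lf j
      have h1 := congrFun (h lf.1 lf.2) j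
      rw [hq0lt x lf.1 lf.2] at h1
      simp only [pattB] at h1
      simp only [reluPattern]
      exact propext (decide_eq_decide.1 h1)
  have hregion : ∀ x, connectedComponentIn {y | reluPattern n W b L y = reluPattern n W b L x} x
      = Reg n W b L (q0 x) := by
    intro x
    rw [hlevel x]
    refine Set.Subset.antisymm (connectedComponentIn_subset _ _) ?_
    exact (Reg_convex n W b L (q0 x)).isPreconnected.subset_connectedComponentIn
      (hxmem x) subset_rfl
  have key : ∀ R ∈ linearRegions n W b L, ∃ q, q ∈ RealNorm n W b L ∧ R = Reg n W b L q := by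
    rintro R ⟨x, rfl⟩
    exact ⟨q0 x, hq0mem x, hregion x⟩
  choose qR hqR1 hqR2 using key
  set F : Set (Fin (n 0) → ℝ) → ((l : Fin L) → Finset (Fin (n (l.1+1)))) := fun R =>
    if h : R ∈ linearRegions n W b L then fun l => Ψ (qR R h) l.1 else fun _ => ∅ with hF
  have hFinj : Set.InjOn F (linearRegions n W b L) := by
    intro R hR R' hR' h
    rw [hF] at h
    simp only [dif_pos hR, dif_pos hR'] at h
    have hfull : Ψ (qR R hR) = Ψ (qR R' hR') := by
      funext m
      rcases lt_or_ge m L with hm | hm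
      · exact congrFun h ⟨m, hm⟩
      · rw [(hΨ _ (hqR1 R hR)).1 m hm, (hΨ _ (hqR1 R' hR')).1 m hm]
    have heq := hΨinj (hqR1 R hR) (hqR1 R' hR') hfull
    rw [hqR2 R hR, hqR2 R' hR', heq]
  set 𝒮 : Finset ((l : Fin L) → Finset (Fin (n (l.1+1)))) :=
    Finset.univ.filter (fun S => ∀ l : Fin L, (S l).card ≤ n 0 ∧
      ∀ m : Fin L, m < l → (S l).card ≤ n (m.1+1) - (S m).card) with h𝒮
  have himg : F '' linearRegions n W b L ⊆ ↑𝒮 := by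
    rintro _ ⟨R, hR, rfl⟩
    simp only [h𝒮, Finset.coe_filter, Set.mem_setOf_eq, Finset.mem_univ, true_and]
    rw [hF]
    simp only [dif_pos hR]
    intro l
    obtain ⟨c1, c2⟩ := ((hΨ _ (hqR1 R hR)).2.1 l.1 l.2)
    exact ⟨c1, fun m hm => c2 m.1 hm⟩
  have h1 : (linearRegions n W b L).ncard ≤ 𝒮.card := by
    rw [← Set.ncard_coe_finset 𝒮, ← Set.ncard_image_of_injOn hFinj]
    exact Set.ncard_le_ncard himg (𝒮.finite_toSet)
  refine le_trans h1 ?_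
  set f : ((l : Fin L) → Finset (Fin (n (l.1+1)))) → ((l : Fin L) → Fin (n (l.1+1)+1)) :=
    fun S l => ⟨(S l).card,
      Nat.lt_succ_of_le (le_of_le_of_eq (Finset.card_le_univ (S l)) (Fintype.card_fin _))⟩
    with hf
  have hmapsto : ∀ S ∈ 𝒮, f S ∈ (Finset.univ : Finset ((l : Fin L) → Fin (n (l.1 + 1) + 1))).filter
      (fun j => ∀ l : Fin L, (j l : ℕ) ≤ n 0 ∧
        ∀ m : Fin L, m < l → (j l : ℕ) ≤ n (m.1 + 1) - (j m : ℕ)) := by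
    intro S hS
    simp only [Finset.mem_filter, Finset.mem_univ, true_and]
    intro l
    exact (Finset.mem_filter.1 hS).2 l
  rw [Finset.card_eq_sum_card_fiberwise hmapsto]
  apply Finset.sum_le_sum
  intro j _
  have hsub : (𝒮.filter fun S => f S = j)
      ⊆ Finset.univ.filter (fun S : (l : Fin L) → Finset (Fin (n (l.1+1))) =>
          ∀ l : Fin L, (S l).card = (j l : ℕ)) := by
    intro S hS
    simp only [Finset.mem_filter, Finset.mem_univ, true_and]
    intro l
    exact congrArg Fin.val (congrFun (Finset.mem_filter.1 hS).2 l)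
  refine le_trans (Finset.card_le_card hsub) (le_of_eq ?_)
  rw [← Fintype.card_subtype]
  rw [Fintype.card_congr (Equiv.subtypePiEquivPi
    (p := fun (l : Fin L) (s : Finset (Fin (n (l.1+1)))) => s.card = (j l : ℕ)))]
  rw [Fintype.card_pi]
  refine Finset.prod_congr rfl ?_
  intro l _
  rw [Fintype.card_subtype]
  rw [← Finset.powerset_univ, ← Finset.powersetCard_eq_filter, Finset.card_powersetCard,
    Finset.card_univ, Fintype.card_fin]
end

section
/- An arrangement of n hyperplanes in ℝ^d partitions ℝ^d into at most ∑_{j=0}^{d} C(n, j) regions; that is, the complement in ℝ^d of the union of n affine hyperplanes has at most ∑_{j=0}^{d} C(n, j) connected components. Consequently, a single-hidden-layer ReLU network with input dimension n_0 and n_1 hidden units has at most ∑_{j=0}^{n_0} C(n_1, j) linear regions. -/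
open Matrix Set

private lemma dot_isLinear {d : ℕ} (v : Fin d → ℝ) :
    IsLinearMap ℝ (fun y : Fin d → ℝ => v ⬝ᵥ y) :=
  ⟨fun x y => dotProduct_add v x y, fun c x => by simp [dotProduct_smul]⟩

private lemma dot_continuous {d : ℕ} (v : Fin d → ℝ) :
    Continuous (fun y : Fin d → ℝ => v ⬝ᵥ y) := by
  unfold dotProduct
  exact continuous_finset_sum _ fun i _ => (continuous_const.mul (continuous_apply i))

private lemma convex_cell {d n : ℕ} (a : Fin n → Fin d → ℝ) (c : Fin n → ℝ) (q : Fin n → Prop) :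
    Convex ℝ {y : Fin d → ℝ | ∀ i, (c i < a i ⬝ᵥ y ↔ q i)} := by
  have h : {y : Fin d → ℝ | ∀ i, (c i < a i ⬝ᵥ y ↔ q i)} =
      ⋂ i, {y : Fin d → ℝ | c i < a i ⬝ᵥ y ↔ q i} := by
    ext y; simp [Set.mem_iInter]
  rw [h]
  refine convex_iInter fun i => ?_
  by_cases hq : q i
  · have h2 : {y : Fin d → ℝ | c i < a i ⬝ᵥ y ↔ q i} = {y | c i < a i ⬝ᵥ y} := by
      ext y; simp [hq]
    rw [h2]; exact convex_halfSpace_gt (dot_isLinear (a i)) _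
  · have h2 : {y : Fin d → ℝ | c i < a i ⬝ᵥ y ↔ q i} = {y | a i ⬝ᵥ y ≤ c i} := by
      ext y; simp [hq, not_lt]
    rw [h2]; exact convex_halfSpace_le (dot_isLinear (a i)) _

private lemma dot_sum_smul {d m : ℕ} (v : Fin d → ℝ) (w : Fin m → Fin d → ℝ) (t : Fin m → ℝ) :
    v ⬝ᵥ (∑ k, t k • w k) = ∑ k, t k * (v ⬝ᵥ w k) := by
  simp [dotProduct, Finset.mul_sum]
  rw [Finset.sum_comm]
  apply Finset.sum_congr rfl
  intros; apply Finset.sum_congr rfl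
  intros; ring

private lemma pattern_bound :
    ∀ (n d : ℕ) (a : Fin n → Fin d → ℝ) (c : Fin n → ℝ),
      (Set.range (fun y : Fin d → ℝ => (fun i => c i < a i ⬝ᵥ y : Fin n → Prop))).ncard ≤
        ∑ j ∈ Finset.range (d + 1), n.choose j := by
  intro n
  induction n with
  | zero =>
      intro d a c
      have h1 : (Set.range fun y : Fin d → ℝ => (fun i => c i < a i ⬝ᵥ y : Fin 0 → Prop)) ⊆
          {fun i : Fin 0 => i.elim0} := by
        rintro p ⟨y, rfl⟩
        exact Set.mem_singleton_iff.mpr (funext fun i => i.elim0)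
      calc (Set.range fun y : Fin d → ℝ => (fun i => c i < a i ⬝ᵥ y : Fin 0 → Prop)).ncard
          ≤ ({fun i : Fin 0 => i.elim0} : Set (Fin 0 → Prop)).ncard :=
            Set.ncard_le_ncard h1 (Set.toFinite _)
        _ = 1 := Set.ncard_singleton _
        _ ≤ _ := Finset.single_le_sum (f := fun j => Nat.choose 0 j)
            (fun i _ => Nat.zero_le _) (Finset.mem_range.mpr (Nat.succ_pos d))
  | succ n ih =>
      intro d a c
      rcases d with _ | e
      · -- dimension 0 : the pattern map is constant
        have h1 : (Set.range fun y : Fin 0 → ℝ => (fun i => c i < a i ⬝ᵥ y : Fin (n+1) → Prop)) ⊆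
            {(fun i => c i < a i ⬝ᵥ (fun _ => (0:ℝ)) : Fin (n+1) → Prop)} := by
          rintro p ⟨y, rfl⟩
          have hy : y = fun _ => (0:ℝ) := Subsingleton.elim _ _
          rw [hy]
          exact rfl
        calc (Set.range fun y : Fin 0 → ℝ =>
                (fun i => c i < a i ⬝ᵥ y : Fin (n+1) → Prop)).ncard
            ≤ ({(fun i => c i < a i ⬝ᵥ (fun _ => (0:ℝ)) : Fin (n+1) → Prop)} :
                Set (Fin (n+1) → Prop)).ncard := Set.ncard_le_ncard h1 (Set.toFinite _)
          _ = 1 := Set.ncard_singleton _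
          _ ≤ _ := Finset.single_le_sum (f := fun j => Nat.choose (n+1) j)
              (fun i _ => Nat.zero_le _) (Finset.mem_range.mpr (Nat.succ_pos 0))
      · -- dimension e+1
        set aL := a (Fin.last n) with haLdef
        set cL := c (Fin.last n) with hcLdef
        set P : (Fin (e+1) → ℝ) → (Fin (n+1) → Prop) :=
          fun y => fun i => c i < a i ⬝ᵥ y with hPdef
        set Q : (Fin (e+1) → ℝ) → (Fin n → Prop) :=
          fun y => fun i => c i.castSucc < a i.castSucc ⬝ᵥ y with hQdef
        set T : Set (Fin n → Prop) :=
          {q | ∃ y : Fin (e+1) → ℝ,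
            (∀ i, (c i.castSucc < a i.castSucc ⬝ᵥ y ↔ q i)) ∧ cL < aL ⬝ᵥ y} with hTdef
        set F : Set (Fin n → Prop) :=
          {q | ∃ y : Fin (e+1) → ℝ,
            (∀ i, (c i.castSucc < a i.castSucc ⬝ᵥ y ↔ q i)) ∧ ¬ cL < aL ⬝ᵥ y} with hFdef
        have stepA : (Set.range P).ncard ≤ T.ncard + F.ncard := by
          have hsplit : Set.range P =
              {p ∈ Set.range P | p (Fin.last n)} ∪ {p ∈ Set.range P | ¬ p (Fin.last n)} := by
            ext p
            by_cases h : p (Fin.last n) <;> simp [h]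
          have hTle : {p ∈ Set.range P | p (Fin.last n)}.ncard ≤ T.ncard := by
            refine Set.ncard_le_ncard_of_injOn (fun p => fun i : Fin n => p i.castSucc)
              ?_ ?_ (Set.toFinite _)
            · rintro p ⟨⟨y, rfl⟩, hlast⟩
              exact ⟨y, fun i => Iff.rfl, hlast⟩
            · rintro p ⟨⟨y, rfl⟩, hlast⟩ p' ⟨⟨y', rfl⟩, hlast'⟩ hpq
              funext i
              refine Fin.lastCases ?_ (fun j => congrFun hpq j) i
              exact propext (iff_of_true hlast hlast')
          have hFle : {p ∈ Set.range P | ¬ p (Fin.last n)}.ncard ≤ F.ncard := by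
            refine Set.ncard_le_ncard_of_injOn (fun p => fun i : Fin n => p i.castSucc)
              ?_ ?_ (Set.toFinite _)
            · rintro p ⟨⟨y, rfl⟩, hlast⟩
              exact ⟨y, fun i => Iff.rfl, hlast⟩
            · rintro p ⟨⟨y, rfl⟩, hlast⟩ p' ⟨⟨y', rfl⟩, hlast'⟩ hpq
              funext i
              refine Fin.lastCases ?_ (fun j => congrFun hpq j) i
              exact propext (iff_of_false hlast hlast')
          calc (Set.range P).ncard
              = ({p ∈ Set.range P | p (Fin.last n)} ∪
                  {p ∈ Set.range P | ¬ p (Fin.last n)}).ncard := by rw [← hsplit]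
            _ ≤ {p ∈ Set.range P | p (Fin.last n)}.ncard +
                  {p ∈ Set.range P | ¬ p (Fin.last n)}.ncard := Set.ncard_union_le _ _
            _ ≤ T.ncard + F.ncard := Nat.add_le_add hTle hFle
        have hTF_sub : T ∪ F ⊆ Set.range Q := by
          rintro q (⟨y, hq, _⟩ | ⟨y, hq, _⟩) <;>
            exact ⟨y, funext fun i => propext (hq i)⟩
        have stepB : T.ncard + F.ncard ≤ (Set.range Q).ncard + (T ∩ F).ncard := by
          rw [← Set.ncard_union_add_ncard_inter T F (Set.toFinite _) (Set.toFinite _)]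
          exact Nat.add_le_add_right (Set.ncard_le_ncard hTF_sub (Set.toFinite _)) _
        have hQ_le : (Set.range Q).ncard ≤ ∑ j ∈ Finset.range (e+1+1), n.choose j :=
          ih (e+1) (fun i => a i.castSucc) (fun i => c i.castSucc)
        have stepC : (T ∩ F).ncard ≤ ∑ j ∈ Finset.range (e + 1), n.choose j := by
          by_cases haL : aL = 0
          · have hempty : T ∩ F = ∅ := by
              ext q
              simp only [Set.mem_inter_iff, Set.mem_empty_iff_false, iff_false, not_and]
              rintro ⟨y₁, _, h1⟩ ⟨y₂, _, h2⟩
              rw [haL, zero_dotProduct] at h1 h2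
              exact h2 h1
            rw [hempty]
            simp
          · -- aL ≠ 0 : the doubled patterns live on the hyperplane {aL ⬝ᵥ y = cL}
            set f : (Fin (e+1) → ℝ) →ₗ[ℝ] ℝ := IsLinearMap.mk' _ (dot_isLinear aL) with hfdef
            have hself : aL ⬝ᵥ aL ≠ 0 := fun h => haL (dotProduct_self_eq_zero.mp h)
            have hsurj : Function.Surjective f := by
              intro r
              refine ⟨(r / (aL ⬝ᵥ aL)) • aL, ?_⟩
              show aL ⬝ᵥ ((r / (aL ⬝ᵥ aL)) • aL) = r
              rw [dotProduct_smul, smul_eq_mul, div_mul_cancel₀ _ hself]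
            have hrange : LinearMap.range f = ⊤ := LinearMap.range_eq_top.mpr hsurj
            have hker : Module.finrank ℝ (LinearMap.ker f) = e := by
              have h1 := LinearMap.finrank_range_add_finrank_ker f
              rw [hrange, finrank_top, Module.finrank_self] at h1
              simp [Module.finrank_pi] at h1
              omega
            have hEq : Module.finrank ℝ (Fin e → ℝ) = Module.finrank ℝ (LinearMap.ker f) := by
              simp [hker, Module.finrank_pi]
            set E := LinearEquiv.ofFinrankEq (Fin e → ℝ) (LinearMap.ker f) hEq with hEdef
            set L : (Fin e → ℝ) →ₗ[ℝ] (Fin (e+1) → ℝ) :=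
              (LinearMap.ker f).subtype.comp E.toLinearMap with hLdef
            set y₀ : Fin (e+1) → ℝ := (cL / (aL ⬝ᵥ aL)) • aL with hy₀def
            have hy₀ : aL ⬝ᵥ y₀ = cL := by
              rw [hy₀def, dotProduct_smul, smul_eq_mul, div_mul_cancel₀ _ hself]
            have hdot : ∀ (v : Fin (e+1) → ℝ) (t : Fin e → ℝ),
                v ⬝ᵥ L t = (fun k => v ⬝ᵥ L (fun j => if k = j then (1:ℝ) else 0)) ⬝ᵥ t := by
              intro v t
              have h1 : L t = ∑ k, t k • L (fun j => if k = j then (1:ℝ) else 0) := by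
                conv_lhs => rw [pi_eq_sum_univ t]
                rw [map_sum]
                simp only [_root_.map_smul]
              rw [h1, dot_sum_smul]
              simp only [dotProduct]
              exact Finset.sum_congr rfl fun k _ => mul_comm _ _
            have hsub : T ∩ F ⊆ Set.range (fun t : Fin e → ℝ =>
                (fun i => (c i.castSucc - a i.castSucc ⬝ᵥ y₀) <
                  (fun k => a i.castSucc ⬝ᵥ L (fun j => if k = j then (1:ℝ) else 0)) ⬝ᵥ t
                  : Fin n → Prop)) := by
              rintro q ⟨⟨y₁, hq1, h1⟩, ⟨y₂, hq2, h2⟩⟩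
              set g : ℝ → ℝ := fun r => aL ⬝ᵥ (y₂ + r • (y₁ - y₂)) with hgdef
              have hgc : Continuous g :=
                (dot_continuous aL).comp (continuous_const.add
                  (continuous_id.smul continuous_const))
              have hg0 : g 0 = aL ⬝ᵥ y₂ := by simp [hgdef]
              have hg1 : g 1 = aL ⬝ᵥ y₁ := by simp [hgdef]
              have hmem : cL ∈ Set.Icc (g 0) (g 1) := by
                rw [hg0, hg1]
                exact ⟨not_lt.mp h2, le_of_lt h1⟩
              obtain ⟨r, hr, hgr⟩ := intermediate_value_Icc zero_le_one hgc.continuousOn hmem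
              set ys : Fin (e+1) → ℝ := y₂ + r • (y₁ - y₂) with hysdef
              have hysH : aL ⬝ᵥ ys = cL := hgr
              have hyscell : ∀ i : Fin n, (c i.castSucc < a i.castSucc ⬝ᵥ ys ↔ q i) := by
                have hseg : ys ∈ segment ℝ y₂ y₁ := by
                  rw [segment_eq_image' ℝ y₂ y₁]
                  exact ⟨r, hr, rfl⟩
                exact (convex_cell (fun i : Fin n => a i.castSucc)
                  (fun i => c i.castSucc) q).segment_subset hq2 hq1 hseg
              have hkmem : ys - y₀ ∈ LinearMap.ker f := by
                rw [LinearMap.mem_ker, map_sub]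
                show aL ⬝ᵥ ys - aL ⬝ᵥ y₀ = 0
                rw [hysH, hy₀, sub_self]
              refine ⟨E.symm ⟨ys - y₀, hkmem⟩, ?_⟩
              have hLt : L (E.symm ⟨ys - y₀, hkmem⟩) = ys - y₀ := by
                simp [hLdef]
              funext i
              apply propext
              show c i.castSucc - a i.castSucc ⬝ᵥ y₀ <
                  (fun k => a i.castSucc ⬝ᵥ L fun j => if k = j then (1:ℝ) else 0) ⬝ᵥ
                    (E.symm ⟨ys - y₀, hkmem⟩) ↔ q i
              rw [← hdot, hLt, dotProduct_sub, sub_lt_sub_iff_right]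
              exact hyscell i
            calc (T ∩ F).ncard
                ≤ (Set.range (fun t : Fin e → ℝ =>
                    (fun i => (c i.castSucc - a i.castSucc ⬝ᵥ y₀) <
                      (fun k => a i.castSucc ⬝ᵥ L (fun j => if k = j then (1:ℝ) else 0)) ⬝ᵥ t
                      : Fin n → Prop))).ncard := Set.ncard_le_ncard hsub (Set.toFinite _)
              _ ≤ ∑ j ∈ Finset.range (e + 1), n.choose j := ih e _ _
        have harith : ∑ j ∈ Finset.range (e+1+1), n.choose j +
            ∑ j ∈ Finset.range (e+1), n.choose j
            = ∑ j ∈ Finset.range (e+1+1), (n+1).choose j := by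
          have l1 : ∑ j ∈ Finset.range (e+1+1), n.choose j
              = ∑ k ∈ Finset.range (e+1), n.choose (k+1) + n.choose 0 :=
            Finset.sum_range_succ' _ _
          have l2 : ∑ j ∈ Finset.range (e+1+1), (n+1).choose j
              = ∑ k ∈ Finset.range (e+1), (n+1).choose (k+1) + (n+1).choose 0 :=
            Finset.sum_range_succ' _ _
          have l3 : ∑ k ∈ Finset.range (e+1), (n+1).choose (k+1)
              = ∑ k ∈ Finset.range (e+1), n.choose k +
                ∑ k ∈ Finset.range (e+1), n.choose (k+1) := by
            rw [← Finset.sum_add_distrib]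
            exact Finset.sum_congr rfl fun k _ => Nat.choose_succ_succ n k
          simp only [Nat.choose_zero_right] at l1 l2
          omega
        calc (Set.range P).ncard
            ≤ T.ncard + F.ncard := stepA
          _ ≤ (Set.range Q).ncard + (T ∩ F).ncard := stepB
          _ ≤ ∑ j ∈ Finset.range (e+1+1), n.choose j +
              ∑ j ∈ Finset.range (e+1), n.choose j := Nat.add_le_add hQ_le stepC
          _ = ∑ j ∈ Finset.range (e+1+1), (n+1).choose j := harith

private lemma comp_eq {d n : ℕ} (a : Fin n → Fin d → ℝ) (c : Fin n → ℝ) (x : Fin d → ℝ)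
    (hx : x ∈ {y : Fin d → ℝ | ∀ i, a i ⬝ᵥ y ≠ c i}) :
    connectedComponentIn {y : Fin d → ℝ | ∀ i, a i ⬝ᵥ y ≠ c i} x
      = {y : Fin d → ℝ | ∀ i, (c i < a i ⬝ᵥ y ↔ c i < a i ⬝ᵥ x)} ∩
        {y : Fin d → ℝ | ∀ i, a i ⬝ᵥ y ≠ c i} := by
  classical
  set U := {y : Fin d → ℝ | ∀ i, a i ⬝ᵥ y ≠ c i} with hU
  set W : Set (Fin d → ℝ) :=
    ⋂ i, (if c i < a i ⬝ᵥ x then {y | c i < a i ⬝ᵥ y} else {y | a i ⬝ᵥ y < c i}) with hW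
  have hWeq : W = {y | ∀ i, (c i < a i ⬝ᵥ y ↔ c i < a i ⬝ᵥ x)} ∩ U := by
    ext y
    simp only [hW, Set.mem_iInter, Set.mem_inter_iff, Set.mem_setOf_eq, hU]
    constructor
    · intro h
      constructor
      · intro i
        have hi := h i
        by_cases hc : c i < a i ⬝ᵥ x
        · rw [if_pos hc] at hi; exact iff_of_true hi hc
        · rw [if_neg hc] at hi
          exact iff_of_false (not_lt.mpr (le_of_lt hi)) hc
      · intro i
        have hi := h i
        by_cases hc : c i < a i ⬝ᵥ x
        · rw [if_pos hc] at hi; exact ne_of_gt hi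
        · rw [if_neg hc] at hi; exact ne_of_lt hi
    · rintro ⟨hiff, hU'⟩ i
      by_cases hc : c i < a i ⬝ᵥ x
      · rw [if_pos hc]; exact (hiff i).mpr hc
      · rw [if_neg hc]
        exact lt_of_le_of_ne (not_lt.mp (fun h => hc ((hiff i).mp h))) (hU' i)
  have hconv : Convex ℝ W := by
    rw [hW]
    refine convex_iInter fun i => ?_
    by_cases hc : c i < a i ⬝ᵥ x
    · rw [if_pos hc]; exact convex_halfSpace_gt (dot_isLinear (a i)) _
    · rw [if_neg hc]; exact convex_halfSpace_lt (dot_isLinear (a i)) _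
  have hxW : x ∈ W := by
    rw [hWeq]
    exact ⟨fun i => Iff.rfl, hx⟩
  have hWU : W ⊆ U := by rw [hWeq]; exact Set.inter_subset_right
  apply subset_antisymm
  · intro y hy
    refine ⟨?_, connectedComponentIn_subset U x hy⟩
    intro i
    have hpre := isPreconnected_connectedComponentIn (F := U) (x := x)
    have hsub2 : connectedComponentIn U x ⊆ {z | c i < a i ⬝ᵥ z} ∪ {z | a i ⬝ᵥ z < c i} := by
      intro z hz
      rcases lt_or_gt_of_ne (connectedComponentIn_subset U x hz i) with h | h
      · exact Or.inr h
      · exact Or.inl h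
    have hdisj : Disjoint {z : Fin d → ℝ | c i < a i ⬝ᵥ z} {z : Fin d → ℝ | a i ⬝ᵥ z < c i} := by
      rw [Set.disjoint_left]
      intro z h1 h2
      simp only [Set.mem_setOf_eq] at h1 h2
      exact lt_asymm h1 h2
    have ho1 : IsOpen {z : Fin d → ℝ | c i < a i ⬝ᵥ z} :=
      isOpen_lt continuous_const (dot_continuous (a i))
    have ho2 : IsOpen {z : Fin d → ℝ | a i ⬝ᵥ z < c i} :=
      isOpen_lt (dot_continuous (a i)) continuous_const
    have hxin := mem_connectedComponentIn hx
    rcases hpre.subset_or_subset ho1 ho2 hdisj hsub2 with hs | hs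
    · exact iff_of_true (hs hy) (hs hxin)
    · exact iff_of_false (not_lt.mpr (le_of_lt (hs hy))) (not_lt.mpr (le_of_lt (hs hxin)))
  · rw [← hWeq]
    exact hconv.isPreconnected.subset_connectedComponentIn hxW hWU


/-- (a) The complement of a union of `nH` affine hyperplanes in `ℝ^d` has at most
`∑_{j=0}^{d} C(nH, j)` connected components. (b) Consequently, a single-hidden-layer ReLU
network `f(x) = W₂ max(W₁ x + b₁, 0)` with input dimension `n₀` and `n₁` hidden units has at
most `∑_{j=0}^{n₀} C(n₁, j)` linear regions, where the linear regions are the maximal connected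
subsets of `ℝ^{n₀}` on which the sign pattern of `W₁ x + b₁` is constant. -/
theorem hyperplane_arrangement_regions_and_shallow_relu_regions :
    (∀ (d nH : ℕ) (a : Fin nH → Fin d → ℝ) (c : Fin nH → ℝ), (∀ i, a i ≠ 0) →
      {C : Set (Fin d → ℝ) | ∃ x ∈ {y : Fin d → ℝ | ∀ i, a i ⬝ᵥ y ≠ c i},
          C = connectedComponentIn {y : Fin d → ℝ | ∀ i, a i ⬝ᵥ y ≠ c i} x}.ncard ≤
        ∑ j ∈ Finset.range (d + 1), nH.choose j) ∧
    (∀ (n₀ n₁ : ℕ) (W₁ : Matrix (Fin n₁) (Fin n₀) ℝ) (b₁ : Fin n₁ → ℝ)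
        (_W₂ : Matrix (Fin 1) (Fin n₁) ℝ),
      {R : Set (Fin n₀ → ℝ) | ∃ x, R = connectedComponentIn
          {y : Fin n₀ → ℝ |
            (fun j => 0 < (W₁.mulVec y + b₁) j) = (fun j => 0 < (W₁.mulVec x + b₁) j)} x}.ncard ≤
        ∑ j ∈ Finset.range (n₀ + 1), n₁.choose j) := by
  constructor
  · -- part (a)
    intro d nH a c _ha
    have hsub : {C : Set (Fin d → ℝ) | ∃ x ∈ {y : Fin d → ℝ | ∀ i, a i ⬝ᵥ y ≠ c i},
          C = connectedComponentIn {y : Fin d → ℝ | ∀ i, a i ⬝ᵥ y ≠ c i} x} ⊆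
        (fun q : Fin nH → Prop => {y : Fin d → ℝ | ∀ i, (c i < a i ⬝ᵥ y ↔ q i)} ∩
            {y : Fin d → ℝ | ∀ i, a i ⬝ᵥ y ≠ c i}) ''
          Set.range (fun y : Fin d → ℝ => (fun i => c i < a i ⬝ᵥ y : Fin nH → Prop)) := by
      rintro C ⟨x, hx, rfl⟩
      exact ⟨fun i => c i < a i ⬝ᵥ x, ⟨x, rfl⟩, (comp_eq a c x hx).symm⟩
    calc {C : Set (Fin d → ℝ) | ∃ x ∈ {y : Fin d → ℝ | ∀ i, a i ⬝ᵥ y ≠ c i},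
            C = connectedComponentIn {y : Fin d → ℝ | ∀ i, a i ⬝ᵥ y ≠ c i} x}.ncard
        ≤ ((fun q : Fin nH → Prop => {y : Fin d → ℝ | ∀ i, (c i < a i ⬝ᵥ y ↔ q i)} ∩
            {y : Fin d → ℝ | ∀ i, a i ⬝ᵥ y ≠ c i}) ''
          Set.range (fun y : Fin d → ℝ =>
            (fun i => c i < a i ⬝ᵥ y : Fin nH → Prop))).ncard :=
          Set.ncard_le_ncard hsub ((Set.toFinite _).image _)
      _ ≤ (Set.range (fun y : Fin d → ℝ =>
            (fun i => c i < a i ⬝ᵥ y : Fin nH → Prop))).ncard :=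
          Set.ncard_image_le (Set.toFinite _)
      _ ≤ ∑ j ∈ Finset.range (d + 1), nH.choose j := pattern_bound nH d a c
  · -- part (b)
    intro n₀ n₁ W₁ b₁ _W₂
    set P : (Fin n₀ → ℝ) → (Fin n₁ → Prop) := fun y => fun i => -b₁ i < W₁ i ⬝ᵥ y with hPdef
    have hPP : ∀ y : Fin n₀ → ℝ, (fun j => 0 < (W₁.mulVec y + b₁) j) = P y := by
      intro y
      funext j
      apply propext
      show 0 < W₁ j ⬝ᵥ y + b₁ j ↔ -b₁ j < W₁ j ⬝ᵥ y
      constructor <;> intro h <;> linarith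
    have hsub : {R : Set (Fin n₀ → ℝ) | ∃ x, R = connectedComponentIn
          {y : Fin n₀ → ℝ |
            (fun j => 0 < (W₁.mulVec y + b₁) j) = (fun j => 0 < (W₁.mulVec x + b₁) j)} x} ⊆
        (fun q : Fin n₁ → Prop => {y : Fin n₀ → ℝ | P y = q}) '' Set.range P := by
      rintro R ⟨x, rfl⟩
      refine ⟨P x, ⟨x, rfl⟩, ?_⟩
      have hSeq : {y : Fin n₀ → ℝ |
            (fun j => 0 < (W₁.mulVec y + b₁) j) = (fun j => 0 < (W₁.mulVec x + b₁) j)}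
          = {y : Fin n₀ → ℝ | P y = P x} := by
        ext y
        rw [Set.mem_setOf_eq, Set.mem_setOf_eq, hPP y, hPP x]
      have hcell : {y : Fin n₀ → ℝ | P y = P x}
          = {y : Fin n₀ → ℝ | ∀ i, (-b₁ i < W₁ i ⬝ᵥ y ↔ P x i)} := by
        ext y
        simp only [Set.mem_setOf_eq, funext_iff, eq_iff_iff]
        exact Iff.rfl
      have hconv : Convex ℝ {y : Fin n₀ → ℝ | P y = P x} := by
        rw [hcell]
        exact convex_cell (fun i => W₁ i) (fun i => -b₁ i) (P x)
      have hxS : x ∈ {y : Fin n₀ → ℝ | P y = P x} := rfl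
      rw [hSeq]
      show {y : Fin n₀ → ℝ | P y = P x} = connectedComponentIn {y : Fin n₀ → ℝ | P y = P x} x
      apply subset_antisymm
      · exact hconv.isPreconnected.subset_connectedComponentIn hxS subset_rfl
      · exact connectedComponentIn_subset _ _
    calc {R : Set (Fin n₀ → ℝ) | ∃ x, R = connectedComponentIn
          {y : Fin n₀ → ℝ |
            (fun j => 0 < (W₁.mulVec y + b₁) j) = (fun j => 0 < (W₁.mulVec x + b₁) j)} x}.ncard
        ≤ ((fun q : Fin n₁ → Prop => {y : Fin n₀ → ℝ | P y = q}) '' Set.range P).ncard :=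
          Set.ncard_le_ncard hsub ((Set.toFinite _).image _)
      _ ≤ (Set.range P).ncard := Set.ncard_image_le (Set.toFinite _)
      _ ≤ ∑ j ∈ Finset.range (n₀ + 1), n₁.choose j :=
          pattern_bound n₁ n₀ (fun i => W₁ i) (fun i => -b₁ i)
end

section
/- Every continuous piecewise affine function f: ℝ^m → ℝ can be written as the difference f = γ − η of two convex continuous piecewise affine functions γ, η: ℝ^m → ℝ, each of which can be expressed as the pointwise maximum of finitely many affine functions. -/
open Matrix

/-- A convex polyhedron in `ℝ^m`: a finite intersection of closed half-spaces. -/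
def IsPolyhedron {m : ℕ} (P : Set (Fin m → ℝ)) : Prop :=
  ∃ (k : ℕ) (a : Fin k → Fin m → ℝ) (c : Fin k → ℝ), P = {x | ∀ i, a i ⬝ᵥ x ≤ c i}

/-- A continuous piecewise affine function `ℝ^m → ℝ`: continuous, and there is a finite
collection of convex polyhedra covering `ℝ^m` on each of which `f` is affine. -/
def IsCPWA {m : ℕ} (f : (Fin m → ℝ) → ℝ) : Prop :=
  Continuous f ∧ ∃ (M : ℕ) (P : Fin M → Set (Fin m → ℝ)),
    (∀ i, IsPolyhedron (P i)) ∧ (⋃ i, P i) = Set.univ ∧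
    ∀ i, ∃ (a : Fin m → ℝ) (c : ℝ), ∀ x ∈ P i, f x = a ⬝ᵥ x + c


lemma dot_cont {m : ℕ} (a : Fin m → ℝ) : Continuous (fun x : Fin m → ℝ => a ⬝ᵥ x) := by
  simp only [dotProduct]
  exact continuous_finset_sum _ (fun i _ => (continuous_const.mul (continuous_apply i)))

lemma dot_combo {m : ℕ} (a : Fin m → ℝ) (x y : Fin m → ℝ) (p q : ℝ) :
    a ⬝ᵥ (p • x + q • y) = p * (a ⬝ᵥ x) + q * (a ⬝ᵥ y) := by
  rw [dotProduct_add, dotProduct_smul, dotProduct_smul]; rfl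

lemma convexOn_congr {E : Type*} [AddCommMonoid E] [Module ℝ E] {s : Set E} {f g : E → ℝ}
    (h : ConvexOn ℝ s g) (he : ∀ x ∈ s, f x = g x) : ConvexOn ℝ s f := by
  refine ⟨h.1, fun x hx y hy a b ha hb hab => ?_⟩
  rw [he _ hx, he _ hy, he _ (h.1 hx hy ha hb hab)]
  exact h.2 hx hy ha hb hab

lemma convexOn_affine1 (α β : ℝ) {s : Set ℝ} (hs : Convex ℝ s) :
    ConvexOn ℝ s (fun t : ℝ => α * t + β) := by
  refine ⟨hs, fun x _ y _ a b ha hb hab => le_of_eq ?_⟩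
  simp only [smul_eq_mul]; linear_combination (-β) * hab

lemma convexOn_abs_affine1 (α β : ℝ) : ConvexOn ℝ Set.univ (fun t : ℝ => |α * t + β|) := by
  refine ⟨convex_univ, fun x _ y _ a b ha hb hab => ?_⟩
  have : α * (a • x + b • y) + β = a * (α * x + β) + b * (α * y + β) := by
    simp only [smul_eq_mul]; linear_combination (-β) * hab
  simp only [smul_eq_mul]
  calc |α * (a * x + b * y) + β| = |a * (α * x + β) + b * (α * y + β)| := by rw [← this]; rfl
  _ ≤ |a * (α * x + β)| + |b * (α * y + β)| := abs_add_le _ _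
  _ = a * |α * x + β| + b * |α * y + β| := by
      rw [abs_mul, abs_mul, abs_of_nonneg ha, abs_of_nonneg hb]

lemma convexOn_affine_m {m : ℕ} (a : Fin m → ℝ) (c : ℝ) :
    ConvexOn ℝ Set.univ (fun x : Fin m → ℝ => a ⬝ᵥ x + c) := by
  refine ⟨convex_univ, fun x _ y _ p q hp hq hpq => le_of_eq ?_⟩
  simp only [smul_eq_mul, dot_combo]
  linear_combination (-c) * hpq

lemma convexOn_abs_affine_m {m : ℕ} (a : Fin m → ℝ) (c : ℝ) :
    ConvexOn ℝ Set.univ (fun x : Fin m → ℝ => |a ⬝ᵥ x + c|) := by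
  refine ⟨convex_univ, fun x _ y _ p q hp hq hpq => ?_⟩
  have h1 : a ⬝ᵥ (p • x + q • y) + c = p * (a ⬝ᵥ x + c) + q * (a ⬝ᵥ y + c) := by
    rw [dot_combo]; linear_combination (-c) * hpq
  simp only [smul_eq_mul]
  calc |a ⬝ᵥ (p • x + q • y) + c| = |p * (a ⬝ᵥ x + c) + q * (a ⬝ᵥ y + c)| := by rw [h1]
  _ ≤ |p * (a ⬝ᵥ x + c)| + |q * (a ⬝ᵥ y + c)| := abs_add_le _ _
  _ = p * |a ⬝ᵥ x + c| + q * |a ⬝ᵥ y + c| := by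
      rw [abs_mul, abs_mul, abs_of_nonneg hp, abs_of_nonneg hq]

lemma convexOn_finset_sum {E : Type*} [AddCommMonoid E] [Module ℝ E] {D : Set E}
    (hD : Convex ℝ D) {ι : Type*} (s : Finset ι) (F : ι → E → ℝ)
    (h : ∀ i ∈ s, ConvexOn ℝ D (F i)) : ConvexOn ℝ D (fun x => ∑ i ∈ s, F i x) := by
  classical
  induction s using Finset.cons_induction with
  | empty => simpa using convexOn_const 0 hD
  | cons a s' ha ih =>
      simp only [Finset.sum_cons]
      exact (h a (by simp)).add (ih (fun i hi => h i (by simp [hi])))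



-- continuity of sup'
lemma continuous_sup' {E : Type*} [TopologicalSpace E] {ι : Type*} (s : Finset ι)
    (hs : s.Nonempty) (F : ι → E → ℝ) (h : ∀ i ∈ s, Continuous (F i)) :
    Continuous (fun x => s.sup' hs (fun i => F i x)) := by
  classical
  induction hs using Finset.Nonempty.cons_induction with
  | singleton a => simpa using h a (by simp)
  | cons a s' ha hs' ih =>
      simp only [Finset.sup'_cons hs']
      have h1 : Continuous (F a) := h a (by simp)
      have h2 := ih (fun i hi => h i (by simp [hi]))
      exact Continuous.max h1 h2

lemma convexOn_sup'_affine {m : ℕ} {N : ℕ} (a : Fin (N+1) → Fin m → ℝ) (c : Fin (N+1) → ℝ) :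
    ConvexOn ℝ Set.univ (fun x : Fin m → ℝ =>
      Finset.univ.sup' Finset.univ_nonempty (fun i => a i ⬝ᵥ x + c i)) := by
  refine ⟨convex_univ, fun x _ y _ p q hp hq hpq => ?_⟩
  apply Finset.sup'_le
  intro i _
  have h1 : a i ⬝ᵥ (p • x + q • y) + c i = p * (a i ⬝ᵥ x + c i) + q * (a i ⬝ᵥ y + c i) := by
    rw [dotProduct_add, dotProduct_smul, dotProduct_smul]
    simp only [smul_eq_mul]; linear_combination (-(c i)) * hpq
  rw [h1]
  have l1 : a i ⬝ᵥ x + c i ≤ Finset.univ.sup' Finset.univ_nonempty (fun j => a j ⬝ᵥ x + c j) :=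
    Finset.le_sup' (fun j => a j ⬝ᵥ x + c j) (Finset.mem_univ i)
  have l2 : a i ⬝ᵥ y + c i ≤ Finset.univ.sup' Finset.univ_nonempty (fun j => a j ⬝ᵥ y + c j) :=
    Finset.le_sup' (fun j => a j ⬝ᵥ y + c j) (Finset.mem_univ i)
  simp only [smul_eq_mul]
  exact add_le_add (mul_le_mul_of_nonneg_left l1 hp) (mul_le_mul_of_nonneg_left l2 hq)

lemma IsPolyhedron.isClosed {m : ℕ} {P : Set (Fin m → ℝ)} (h : IsPolyhedron P) : IsClosed P := by
  obtain ⟨k, a, c, rfl⟩ := h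
  have : {x : Fin m → ℝ | ∀ i, a i ⬝ᵥ x ≤ c i} = ⋂ i, {x | a i ⬝ᵥ x ≤ c i} := by
    ext x; simp
  rw [this]
  exact isClosed_iInter (fun i => isClosed_le (dot_cont (a i)) continuous_const)

lemma IsPolyhedron.convex {m : ℕ} {P : Set (Fin m → ℝ)} (h : IsPolyhedron P) : Convex ℝ P := by
  obtain ⟨k, a, c, rfl⟩ := h
  intro x hx y hy p q hp hq hpq
  intro i
  have : a i ⬝ᵥ (p • x + q • y) = p * (a i ⬝ᵥ x) + q * (a i ⬝ᵥ y) := by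
    rw [dotProduct_add, dotProduct_smul, dotProduct_smul]; rfl
  simp only [Set.mem_setOf_eq] at hx hy ⊢
  rw [this]
  calc p * (a i ⬝ᵥ x) + q * (a i ⬝ᵥ y) ≤ p * c i + q * c i :=
        add_le_add (mul_le_mul_of_nonneg_left (hx i) hp) (mul_le_mul_of_nonneg_left (hy i) hq)
  _ = c i := by linear_combination (c i) * hpq

lemma isCPWA_sup'_affine {m : ℕ} {N : ℕ} (a : Fin (N+1) → Fin m → ℝ) (c : Fin (N+1) → ℝ) :
    IsCPWA (fun x : Fin m → ℝ =>
      Finset.univ.sup' Finset.univ_nonempty (fun i => a i ⬝ᵥ x + c i)) := by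
  constructor
  · exact continuous_sup' _ _ _ (fun i _ => (dot_cont (a i)).add continuous_const)
  · refine ⟨N+1, fun i => {x | ∀ j, (a j - a i) ⬝ᵥ x ≤ c i - c j}, ?_, ?_, ?_⟩
    · intro i; exact ⟨N+1, fun j => a j - a i, fun j => c i - c j, rfl⟩
    · ext x
      simp only [Set.mem_iUnion, Set.mem_setOf_eq, Set.mem_univ, iff_true]
      obtain ⟨i, _, hi⟩ := Finset.exists_max_image Finset.univ
        (fun i => a i ⬝ᵥ x + c i) Finset.univ_nonempty
      refine ⟨i, fun j => ?_⟩
      have := hi j (Finset.mem_univ j)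
      rw [sub_dotProduct]
      linarith
    · intro i
      refine ⟨a i, c i, fun x hx => ?_⟩
      apply le_antisymm
      · apply Finset.sup'_le
        intro j _
        have := hx j
        rw [sub_dotProduct] at this
        linarith
      · exact Finset.le_sup' (fun j => a j ⬝ᵥ x + c j) (Finset.mem_univ i)

private lemma slope3 {x y z p q r : ℝ} (hxy : x < y) (hyz : y < z)
    (h : (q - p) / (y - x) ≤ (r - q) / (z - y)) :
    (q - p) / (y - x) ≤ (r - p) / (z - x) ∧ (r - p) / (z - x) ≤ (r - q) / (z - y) := by
  have h1 : (0:ℝ) < y - x := by linarith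
  have h2 : (0:ℝ) < z - y := by linarith
  have h3 : (0:ℝ) < z - x := by linarith
  have key : (q - p) * (z - y) ≤ (r - q) * (y - x) := (div_le_div_iff₀ h1 h2).mp h
  constructor
  · rw [div_le_div_iff₀ h1 h3]; nlinarith [key]
  · rw [div_le_div_iff₀ h3 h2]; nlinarith [key]

/-- slope notation -/
noncomputable def sl (f : ℝ → ℝ) (x y : ℝ) : ℝ := (f y - f x) / (y - x)

private lemma sl3 {f : ℝ → ℝ} {x y z : ℝ} (hxy : x < y) (hyz : y < z)
    (h : sl f x y ≤ sl f y z) : sl f x y ≤ sl f x z ∧ sl f x z ≤ sl f y z :=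
  slope3 hxy hyz h

private lemma adj {f : ℝ → ℝ} {s : Set ℝ} (hf : ConvexOn ℝ s f) {x y z : ℝ}
    (hx : x ∈ s) (hz : z ∈ s) (hxy : x < y) (hyz : y < z) : sl f x y ≤ sl f y z :=
  hf.slope_mono_adjacent hx hz hxy hyz

private lemma mem_of_between {s : Set ℝ} (hs : Convex ℝ s) {a b c : ℝ}
    (ha : a ∈ s) (hb : b ∈ s) (h1 : a ≤ c) (h2 : c ≤ b) : c ∈ s :=
  hs.ordConnected.out ha hb ⟨h1, h2⟩

/-- aux for gluing: slope inequality when x ∈ s, z ∈ t. -/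
private lemma glue_aux {f : ℝ → ℝ} {s t : Set ℝ} (hs : ConvexOn ℝ s f) (ht : ConvexOn ℝ t f)
    {u v : ℝ} (hu : u ∈ s ∩ t) (hv : v ∈ s ∩ t) (huv : u < v)
    {x y z : ℝ} (hx : x ∈ s) (hz : z ∈ t) (hy : y ∈ s ∪ t)
    (hxy : x < y) (hyz : y < z) : sl f x y ≤ sl f y z := by
  by_cases hzs : z ∈ s
  · exact adj hs hx hzs hxy hyz
  by_cases hxt : x ∈ t
  · exact adj ht hxt hz hxy hyz
  -- now x ∈ s \ t, z ∈ t \ s; all of s ∩ t lies strictly between x and z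
  have hbet : ∀ w, w ∈ s ∩ t → x < w ∧ w < z := by
    intro w ⟨hws, hwt⟩
    constructor
    · by_contra hcon
      push_neg at hcon
      rcases eq_or_lt_of_le hcon with h | h
      · exact hxt (h ▸ hwt)
      · exact hxt (mem_of_between ht.1 hwt hz h.le (by linarith))
    · by_contra hcon
      push_neg at hcon
      rcases eq_or_lt_of_le hcon with h | h
      · exact hzs (h ▸ hws)
      · exact hzs (mem_of_between hs.1 hx hws (by linarith) h.le)
  obtain ⟨hxu, huz⟩ := hbet u hu
  obtain ⟨hxv, hvz⟩ := hbet v hv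
  rcases hy with hys | hyt
  · by_cases hyt' : y ∈ t
    · -- y ∈ s ∩ t
      by_cases hyv : y < v
      · have c1 : sl f x y ≤ sl f y v := adj hs hx hv.1 hxy hyv
        have c2 : sl f y v ≤ sl f v z := adj ht hyt' hz hyv hvz
        have c3 := (sl3 hyv hvz c2).1
        linarith
      · push_neg at hyv
        have huy : u < y := lt_of_lt_of_le huv hyv
        have c1 : sl f x u ≤ sl f u y := adj hs hx hys hxu huy
        have c2 := (sl3 hxu huy c1).2
        have c3 : sl f u y ≤ sl f y z := adj ht hu.2 hz huy hyz
        linarith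
    · -- y ∈ s \ t : y < u
      have hyu : y < u := by
        by_contra hcon
        push_neg at hcon
        rcases eq_or_lt_of_le hcon with h | h
        · exact hyt' (h ▸ hu.2)
        · exact hyt' (mem_of_between ht.1 hu.2 hz h.le hyz.le)
      have c1 : sl f x y ≤ sl f y u := adj hs hx hu.1 hxy hyu
      have c2 : sl f y u ≤ sl f u v := adj hs hys hv.1 hyu huv
      have c3 : sl f u v ≤ sl f v z := adj ht hu.2 hz huv hvz
      -- sl y u ≤ sl y v ≤ sl y z
      have d1 := (sl3 hyu huv c2).1   -- sl y u ≤ sl y v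
      have d2 := (sl3 hyu huv c2).2   -- sl y v ≤ sl u v
      have d3 : sl f y v ≤ sl f v z := le_trans d2 c3
      have d4 := (sl3 (lt_trans hyu huv) hvz d3).1  -- sl y v ≤ sl y z
      linarith
  · -- y ∈ t ; subcase y ∈ s handled above? no: need y ∉ s case
    by_cases hys : y ∈ s
    · by_cases hyv : y < v
      · have c1 : sl f x y ≤ sl f y v := adj hs hx hv.1 hxy hyv
        have c2 : sl f y v ≤ sl f v z := adj ht hyt hz hyv hvz
        have c3 := (sl3 hyv hvz c2).1
        linarith
      · push_neg at hyv
        have huy : u < y := lt_of_lt_of_le huv hyv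
        have c1 : sl f x u ≤ sl f u y := adj hs hx hys hxu huy
        have c2 := (sl3 hxu huy c1).2
        have c3 : sl f u y ≤ sl f y z := adj ht hu.2 hz huy hyz
        linarith
    · -- y ∈ t \ s : v < y
      have hvy : v < y := by
        by_contra hcon
        push_neg at hcon
        rcases eq_or_lt_of_le hcon with h | h
        · exact hys (h ▸ hv.1)
        · exact hys (mem_of_between hs.1 hx hv.1 hxy.le h.le)
      have c1 : sl f x u ≤ sl f u v := adj hs hx hv.1 hxu huv
      have c2 : sl f u v ≤ sl f v y := adj ht hu.2 hyt huv hvy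
      have c3 : sl f v y ≤ sl f y z := adj ht hv.2 hz hvy hyz
      have d1 := (sl3 hxu huv c1).2   -- sl x v ≤ sl u v
      have d2 : sl f x v ≤ sl f v y := le_trans d1 c2
      have d3 := (sl3 (lt_trans hxu huv) hvy d2).2  -- sl x y ≤ sl v y
      linarith

/-- Gluing two overlapping convexity domains in ℝ. -/
lemma glue {f : ℝ → ℝ} {s t : Set ℝ} (hs : ConvexOn ℝ s f) (ht : ConvexOn ℝ t f)
    {u v : ℝ} (hu : u ∈ s ∩ t) (hv : v ∈ s ∩ t) (huv : u < v) :
    ConvexOn ℝ (s ∪ t) f := by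
  have hconv : Convex ℝ (s ∪ t) := by
    rw [convex_iff_ordConnected]
    constructor
    intro a ha b hb c hc
    rcases ha with has | hat
    · rcases hb with hbs | hbt
      · exact Or.inl (hs.1.ordConnected.out has hbs hc)
      · rcases le_total c u with h | h
        · exact Or.inl (mem_of_between hs.1 has hu.1 hc.1 h)
        · exact Or.inr (mem_of_between ht.1 hu.2 hbt h hc.2)
    · rcases hb with hbs | hbt
      · rcases le_total c u with h | h
        · exact Or.inr (mem_of_between ht.1 hat hu.2 hc.1 h)
        · exact Or.inl (mem_of_between hs.1 hu.1 hbs h hc.2)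
      · exact Or.inr (ht.1.ordConnected.out hat hbt hc)
  apply convexOn_of_slope_mono_adjacent hconv
  intro x y z hx hz hxy hyz
  have hy : y ∈ s ∪ t := hconv.ordConnected.out hx hz ⟨hxy.le, hyz.le⟩
  rcases hx with hxs | hxt
  · rcases hz with hzs | hzt
    · exact adj hs hxs hzs hxy hyz
    · exact glue_aux hs ht hu hv huv hxs hzt hy hxy hyz
  · rcases hz with hzs | hzt
    · exact glue_aux ht hs ⟨hu.2, hu.1⟩ ⟨hv.2, hv.1⟩ huv hxt hzs (hy.symm) hxy hyz
    · exact adj ht hxt hzt hxy hyz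

lemma convexOn_Icc_self (f : ℝ → ℝ) (x : ℝ) : ConvexOn ℝ (Set.Icc x x) f := by
  rw [Set.Icc_self]
  refine ⟨convex_singleton x, fun p hp q hq a b ha hb hab => ?_⟩
  simp only [Set.mem_singleton_iff] at hp hq
  simp only [hp, hq, Convex.combo_self hab]
  exact le_refl _

/-- local convexity (on open intervals) implies global convexity on ℝ -/
lemma local_to_global {f : ℝ → ℝ}
    (h : ∀ t₀ : ℝ, ∃ δ > 0, ConvexOn ℝ (Set.Ioo (t₀ - δ) (t₀ + δ)) f) :
    ConvexOn ℝ Set.univ f := by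
  -- first: convex on every Icc x y
  have key : ∀ x y : ℝ, x ≤ y → ConvexOn ℝ (Set.Icc x y) f := by
    intro x y hxy
    set S : Set ℝ := {u | u ∈ Set.Icc x y ∧ ConvexOn ℝ (Set.Icc x u) f} with hS
    have hxS : x ∈ S := ⟨⟨le_refl x, hxy⟩, convexOn_Icc_self f x⟩
    have hne : S.Nonempty := ⟨x, hxS⟩
    have hbdd : BddAbove S := ⟨y, fun u hu => hu.1.2⟩
    set c := sSup S with hc
    have hcx : x ≤ c := le_csSup hbdd hxS
    have hcy : c ≤ y := csSup_le hne (fun u hu => hu.1.2)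
    obtain ⟨δ, hδ, hloc⟩ := h c
    -- the target point
    set w := min y (c + δ/2) with hw
    have hwx : x ≤ w := le_min hxy (by linarith)
    have hwS : w ∈ S := by
      refine ⟨⟨hwx, min_le_left _ _⟩, ?_⟩
      by_cases hcase : c - δ < x
      · -- Icc x w is inside the local interval
        apply hloc.subset ?_ (convex_Icc x w)
        intro p hp
        exact ⟨lt_of_lt_of_le hcase hp.1, lt_of_le_of_lt hp.2 (by
          have : w ≤ c + δ/2 := min_le_right _ _
          linarith)⟩
      · push_neg at hcase
        obtain ⟨u, huS, hu⟩ := exists_lt_of_lt_csSup hne (show c - δ < c by linarith)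
        have hux : x ≤ u := huS.1.1
        have huc : u ≤ c := le_csSup hbdd huS
        -- glue Icc x u with Ioo (c-δ) (c+δ)
        have hmid : (c - δ + u)/2 ∈ Set.Icc x u ∩ Set.Ioo (c - δ) (c + δ) := by
          constructor
          · exact ⟨by linarith, by linarith⟩
          · exact ⟨by linarith, by linarith⟩
        have humem : u ∈ Set.Icc x u ∩ Set.Ioo (c - δ) (c + δ) := by
          constructor
          · exact ⟨hux, le_refl u⟩
          · exact ⟨hu, by linarith⟩
        have hglue := glue huS.2 hloc hmid humem (by linarith)
        apply hglue.subset ?_ (convex_Icc x w)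
        intro p hp
        rcases le_total p u with h1 | h1
        · exact Or.inl ⟨hp.1, h1⟩
        · refine Or.inr ⟨lt_of_lt_of_le (by linarith) h1, lt_of_le_of_lt hp.2 ?_⟩
          have : w ≤ c + δ/2 := min_le_right _ _
          linarith
    -- w ∈ S forces c = y and then w = y
    have hwc : w ≤ c := le_csSup hbdd hwS
    have hcy' : c = y := by
      by_contra hne'
      have hcy2 : c < y := lt_of_le_of_ne hcy hne'
      have : c < w := lt_min hcy2 (by linarith)
      linarith
    have : w = y := by rw [hw, hcy']; exact min_eq_left (by linarith)
    rw [← this]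
    exact hwS.2
  refine ⟨convex_univ, fun p _ q _ a b ha hb hab => ?_⟩
  rcases le_total p q with h1 | h1
  · have hcv := key p q h1
    exact hcv.2 ⟨le_refl p, h1⟩ ⟨h1, le_refl q⟩ ha hb hab
  · have hcv := (key q p h1).2 ⟨le_refl q, h1⟩ ⟨h1, le_refl p⟩ hb ha (by linarith)
    have e : a • p + b • q = b • q + a • p := add_comm _ _
    rw [e]
    linarith [hcv]

/-- The 1-D key lemma: a piecewise affine function plus the sum of absolute differences
of its pieces is convex. -/
lemma oneD_convex {M : ℕ} (T : Fin M → Set ℝ) (hTc : ∀ i, IsClosed (T i))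
    (hTconv : ∀ i, Convex ℝ (T i)) (hcover : (⋃ i, T i) = Set.univ)
    (α β : Fin M → ℝ) (φ : ℝ → ℝ)
    (hφ : ∀ i, ∀ t ∈ T i, φ t = α i * t + β i) :
    ConvexOn ℝ Set.univ (fun t => φ t +
      ∑ p : Fin M × Fin M, |(α p.1 * t + β p.1) - (α p.2 * t + β p.2)|) := by
  classical
  set Sum : ℝ → ℝ := fun t =>
    ∑ p : Fin M × Fin M, |(α p.1 * t + β p.1) - (α p.2 * t + β p.2)| with hSum
  have habs : ∀ (p : Fin M × Fin M), ConvexOn ℝ Set.univ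
      (fun t : ℝ => |(α p.1 * t + β p.1) - (α p.2 * t + β p.2)|) := by
    intro p
    have : (fun t : ℝ => |(α p.1 * t + β p.1) - (α p.2 * t + β p.2)|) =
        (fun t : ℝ => |(α p.1 - α p.2) * t + (β p.1 - β p.2)|) := by
      funext t; ring_nf
    rw [this]
    exact convexOn_abs_affine1 _ _
  apply local_to_global
  intro t₀
  -- find δ₁ such that the ball only meets pieces containing t₀
  set Bad : Set ℝ := ⋃ (i : {i : Fin M // t₀ ∉ T i}), T i.1 with hBad
  have hBadc : IsClosed Bad := isClosed_iUnion_of_finite (fun i => hTc i.1)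
  have ht₀Bad : t₀ ∉ Bad := by
    simp only [hBad, Set.mem_iUnion]
    rintro ⟨i, hi⟩
    exact i.2 hi
  obtain ⟨δ₁, hδ₁, hball⟩ := Metric.isOpen_iff.mp hBadc.isOpen_compl t₀ ht₀Bad
  -- right piece
  have hmem : ∀ s : ℝ, |s - t₀| < δ₁ → ∃ j, t₀ ∈ T j ∧ s ∈ T j := by
    intro s hs
    have : s ∈ ⋃ i, T i := hcover ▸ Set.mem_univ s
    obtain ⟨j, hj⟩ := Set.mem_iUnion.mp this
    refine ⟨j, ?_, hj⟩
    by_contra h'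
    have hsBad : s ∈ Bad := Set.mem_iUnion.mpr ⟨⟨j, h'⟩, hj⟩
    have : s ∈ Metric.ball t₀ δ₁ := by
      rw [Metric.mem_ball, Real.dist_eq]; exact hs
    exact (hball this) hsBad
  obtain ⟨ip, hipt₀, hips⟩ := hmem (t₀ + δ₁/2) (by
    rw [show t₀ + δ₁/2 - t₀ = δ₁/2 by ring, abs_of_nonneg (by linarith)]; linarith)
  obtain ⟨im, himt₀, hims⟩ := hmem (t₀ - δ₁/2) (by
    rw [show t₀ - δ₁/2 - t₀ = -(δ₁/2) by ring, abs_neg, abs_of_nonneg (by linarith)]; linarith)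
  have hIp : Set.Icc t₀ (t₀ + δ₁/2) ⊆ T ip := (hTconv ip).ordConnected.out hipt₀ hips
  have hIm : Set.Icc (t₀ - δ₁/2) t₀ ⊆ T im := (hTconv im).ordConnected.out hims himt₀
  refine ⟨δ₁/2, by linarith, ?_⟩
  have hφp : ∀ t ∈ Set.Ioo (t₀ - δ₁/2) (t₀ + δ₁/2), t₀ ≤ t → φ t = α ip * t + β ip := by
    intro t ht h'; exact hφ ip t (hIp ⟨h', ht.2.le⟩)
  have hφm : ∀ t ∈ Set.Ioo (t₀ - δ₁/2) (t₀ + δ₁/2), t ≤ t₀ → φ t = α im * t + β im := by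
    intro t ht h'; exact hφ im t (hIm ⟨ht.1.le, h'⟩)
  have heq : α ip * t₀ + β ip = α im * t₀ + β im := by
    rw [← hφ ip t₀ hipt₀, ← hφ im t₀ himt₀]
  by_cases hcase : ip = im
  · -- φ is affine on the whole interval
    subst hcase
    refine convexOn_congr (f := fun t => φ t + Sum t)
      (g := fun t => (α ip * t + β ip) + Sum t) ?_ ?_
    · exact ((convexOn_affine1 _ _ (convex_Ioo _ _)).add
        ((convexOn_finset_sum convex_univ Finset.univ _ (fun p _ => habs p)).subset
          (Set.subset_univ _) (convex_Ioo _ _)))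
    · intro t ht
      show φ t + Sum t = (α ip * t + β ip) + Sum t
      rcases le_total t₀ t with h' | h'
      · rw [hφp t ht h']
      · rw [hφm t ht h']
  · -- two distinct pieces
    set σ := α ip - α im with hσ
    have key : ∀ t : ℝ, (α ip * t + β ip) - (α im * t + β im) = σ * (t - t₀) := by
      intro t; rw [hσ]; linear_combination heq
    set s₀ : Finset (Fin M × Fin M) := {(ip, im), (im, ip)} with hs₀
    have hpairne : (ip, im) ≠ (im, ip) := by
      intro h; exact hcase (congrArg Prod.fst h)
    have hsplit : ∀ t : ℝ, Sum t =
        (∑ p ∈ Finset.univ \ s₀, |(α p.1 * t + β p.1) - (α p.2 * t + β p.2)|)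
        + (|(α ip * t + β ip) - (α im * t + β im)| + |(α im * t + β im) - (α ip * t + β ip)|) := by
      intro t
      simp only [hSum]
      rw [← Finset.sum_sdiff (Finset.subset_univ s₀)]
      congr 1
      rw [hs₀, Finset.sum_pair hpairne]
    set Rest : ℝ → ℝ := fun t =>
      ∑ p ∈ Finset.univ \ s₀, |(α p.1 * t + β p.1) - (α p.2 * t + β p.2)| with hRest
    have hRestconv : ConvexOn ℝ Set.univ Rest :=
      convexOn_finset_sum convex_univ _ _ (fun p _ => habs p)
    set G : ℝ → ℝ := fun t =>
      max ((α im * t + β im) - 2 * |σ| *(t - t₀)) ((α im * t + β im) + (σ + 2 * |σ| )*(t - t₀))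
        + Rest t with hG
    have hGconv : ConvexOn ℝ Set.univ G := by
      have h1 : ConvexOn ℝ Set.univ (fun t : ℝ => (α im * t + β im) - 2 * |σ| *(t - t₀)) := by
        have : (fun t : ℝ => (α im * t + β im) - 2 * |σ| *(t - t₀)) =
            (fun t : ℝ => (α im - 2 * |σ| ) * t + (β im + 2 * |σ| *t₀)) := by funext t; ring
        rw [this]; exact convexOn_affine1 _ _ convex_univ
      have h2 : ConvexOn ℝ Set.univ (fun t : ℝ => (α im * t + β im) + (σ + 2 * |σ| )*(t - t₀)) := by
        have : (fun t : ℝ => (α im * t + β im) + (σ + 2 * |σ| )*(t - t₀)) =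
            (fun t : ℝ => (α im + (σ + 2 * |σ| )) * t + (β im - (σ + 2 * |σ| )*t₀)) := by
          funext t; ring
        rw [this]; exact convexOn_affine1 _ _ convex_univ
      have hmax := h1.sup h2
      exact hmax.add hRestconv
    refine convexOn_congr (f := fun t => φ t + Sum t) (g := G)
      (hGconv.subset (Set.subset_univ _) (convex_Ioo _ _)) ?_
    intro t ht
    show φ t + Sum t = G t
    have habsσ : σ + 2 * |σ|  ≥ -(2 * |σ| ) := by
      have h1 := neg_abs_le σ; have h2 := abs_nonneg σ; linarith
    rcases le_total t₀ t with h' | h'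
    · -- right side
      have hφt : φ t = α im * t + β im + σ * (t - t₀) := by
        rw [hφp t ht h']; linear_combination key t
      have habs1 : |(α ip * t + β ip) - (α im * t + β im)| = |σ| * (t - t₀) := by
        rw [key t, abs_mul, abs_of_nonneg (by linarith : (0:ℝ) ≤ t - t₀)]
      have habs2 : |(α im * t + β im) - (α ip * t + β ip)| = |σ| * (t - t₀) := by
        rw [show (α im * t + β im) - (α ip * t + β ip) = -(((α ip * t + β ip) - (α im * t + β im))) by ring,
          abs_neg, habs1]
      have hmaxeq : max ((α im * t + β im) - 2 * |σ| *(t - t₀)) ((α im * t + β im) + (σ + 2 * |σ| )*(t - t₀))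
          = (α im * t + β im) + (σ + 2 * |σ| )*(t - t₀) := by
        apply max_eq_right
        nlinarith [habsσ, sub_nonneg.mpr h']
      rw [hG]
      simp only
      rw [hmaxeq, hsplit t, hφt, habs1, habs2]
      ring
    · -- left side
      have hφt : φ t = α im * t + β im := hφm t ht h'
      have habs1 : |(α ip * t + β ip) - (α im * t + β im)| = |σ| * (t₀ - t) := by
        rw [key t, abs_mul, abs_of_nonpos (by linarith : t - t₀ ≤ (0:ℝ))]; ring
      have habs2 : |(α im * t + β im) - (α ip * t + β ip)| = |σ| * (t₀ - t) := by
        rw [show (α im * t + β im) - (α ip * t + β ip) = -(((α ip * t + β ip) - (α im * t + β im))) by ring,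
          abs_neg, habs1]
      have hmaxeq : max ((α im * t + β im) - 2 * |σ| *(t - t₀)) ((α im * t + β im) + (σ + 2 * |σ| )*(t - t₀))
          = (α im * t + β im) - 2 * |σ| *(t - t₀) := by
        apply max_eq_left
        nlinarith [habsσ, sub_nonneg.mpr h']
      rw [hG]
      simp only
      rw [hmaxeq, hsplit t, hφt, habs1, habs2]
      ring

lemma interior_union_empty {X : Type*} [TopologicalSpace X] {A B : Set X}
    (hA : IsClosed A) (hiA : interior A = ∅) (hiB : interior B = ∅) :
    interior (A ∪ B) = ∅ := by
  have h1 : interior (A ∪ B) \ A ⊆ interior B := by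
    apply interior_maximal
    · intro x hx
      rcases (interior_subset hx.1) with h | h
      · exact absurd h hx.2
      · exact h
    · exact isOpen_interior.sdiff hA
  rw [hiB, Set.subset_empty_iff, Set.diff_eq_empty] at h1
  have h2 : interior (A ∪ B) ⊆ interior A := interior_maximal h1 isOpen_interior
  rw [hiA, Set.subset_empty_iff] at h2
  exact h2

lemma interior_biUnion_empty {X : Type*} [TopologicalSpace X] {ι : Type*}
    (s : Finset ι) (F : ι → Set X) (h : ∀ i ∈ s, IsClosed (F i) ∧ interior (F i) = ∅) :
    IsClosed (⋃ i ∈ s, F i) ∧ interior (⋃ i ∈ s, F i) = ∅ := by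
  classical
  induction s using Finset.induction_on with
  | empty => simp
  | insert a s' hne ih =>
      rw [Finset.set_biUnion_insert]
      have ha := h a (Finset.mem_insert_self a s')
      have hrest := ih (fun i hi => h i (Finset.mem_insert_of_mem hi))
      exact ⟨ha.1.union hrest.1, interior_union_empty ha.1 ha.2 hrest.2⟩

lemma convex_pwa_eq_sup {m : ℕ} {ι : Type*} [Fintype ι] (h : (Fin m → ℝ) → ℝ)
    (hconv : ConvexOn ℝ Set.univ h) (P : ι → Set (Fin m → ℝ))
    (hcl : ∀ i, IsClosed (P i)) (hcover : (⋃ i, P i) = Set.univ)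
    (A : ι → Fin m → ℝ) (C : ι → ℝ)
    (haff : ∀ i, ∀ x ∈ P i, h x = A i ⬝ᵥ x + C i) :
    ∃ (N : ℕ) (a : Fin (N+1) → Fin m → ℝ) (c : Fin (N+1) → ℝ),
      ∀ x, h x = Finset.univ.sup' Finset.univ_nonempty (fun i => a i ⬝ᵥ x + c i) := by
  classical
  set J : Finset ι := Finset.univ.filter (fun i => (interior (P i)).Nonempty) with hJ
  -- every point is in a piece with nonempty interior
  have claim2 : ∀ x, ∃ i ∈ J, x ∈ P i := by
    intro x
    by_contra hx
    push_neg at hx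
    have hWprop := interior_biUnion_empty (Finset.univ \ J) P (by
      intro i hi
      refine ⟨hcl i, ?_⟩
      rw [Finset.mem_sdiff, hJ, Finset.mem_filter] at hi
      have : ¬ (interior (P i)).Nonempty := fun hcon => hi.2 ⟨Finset.mem_univ i, hcon⟩
      exact Set.not_nonempty_iff_eq_empty.mp this)
    set V : Set (Fin m → ℝ) := (⋃ i ∈ J, P i)ᶜ with hV
    have hVopen : IsOpen V :=
      (Set.Finite.isClosed_biUnion (J.finite_toSet) (fun i _ => hcl i)).isOpen_compl
    have hxV : x ∈ V := by
      rw [hV]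
      simp only [Set.mem_compl_iff, Set.mem_iUnion]
      rintro ⟨i, hiJ, hxi⟩
      exact hx i hiJ hxi
    have hVsub : V ⊆ ⋃ i ∈ (Finset.univ \ J), P i := by
      intro y hy
      have : y ∈ ⋃ i, P i := hcover ▸ Set.mem_univ y
      obtain ⟨i, hyi⟩ := Set.mem_iUnion.mp this
      have hiJ : i ∉ J := by
        intro hiJ
        rw [hV] at hy
        exact hy (Set.mem_biUnion hiJ hyi)
      exact Set.mem_biUnion (Finset.mem_sdiff.mpr ⟨Finset.mem_univ i, hiJ⟩) hyi
    have : V ⊆ interior (⋃ i ∈ (Finset.univ \ J), P i) := interior_maximal hVsub hVopen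
    rw [hWprop.2] at this
    exact this hxV
  -- affine pieces with nonempty interior lie below h everywhere
  have claim1 : ∀ i ∈ J, ∀ x, A i ⬝ᵥ x + C i ≤ h x := by
    intro i hiJ x
    have hint : (interior (P i)).Nonempty := (Finset.mem_filter.mp hiJ).2
    obtain ⟨y, hy⟩ := hint
    obtain ⟨ε, hε, hball⟩ := Metric.mem_nhds_iff.mp (mem_interior_iff_mem_nhds.mp hy)
    set t : ℝ := min (1/2) (ε / (2 * (dist x y + 1))) with htdef
    have hd : (0:ℝ) ≤ dist x y := dist_nonneg
    have ht : 0 < t := lt_min (by norm_num) (by positivity)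
    have ht1 : t ≤ 1/2 := min_le_left _ _
    set z : (Fin m → ℝ) := y + t • (x - y) with hz
    have hzP : z ∈ P i := by
      apply hball
      rw [Metric.mem_ball, hz]
      have : dist (y + t • (x - y)) y = t * dist x y := by
        rw [dist_eq_norm]
        simp only [add_sub_cancel_left]
        rw [norm_smul, Real.norm_eq_abs, abs_of_pos ht, dist_eq_norm]
      rw [this]
      calc t * dist x y ≤ (ε / (2 * (dist x y + 1))) * dist x y := by
            apply mul_le_mul_of_nonneg_right (min_le_right _ _) hd
      _ < ε := by
            rw [div_mul_eq_mul_div, div_lt_iff₀ (by positivity)]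
            nlinarith
    have hyP : y ∈ P i := interior_subset hy
    have hcombo : z = (1 - t) • y + t • x := by
      rw [hz]
      rw [smul_sub, sub_smul, one_smul]
      abel
    have hconvineq := hconv.2 (Set.mem_univ y) (Set.mem_univ x)
      (by linarith : (0:ℝ) ≤ 1 - t) ht.le (by ring)
    rw [← hcombo] at hconvineq
    have hz1 : h z = A i ⬝ᵥ z + C i := haff i z hzP
    have hy1 : h y = A i ⬝ᵥ y + C i := haff i y hyP
    have hz2 : A i ⬝ᵥ z = (1 - t) * (A i ⬝ᵥ y) + t * (A i ⬝ᵥ x) := by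
      rw [hcombo]; exact dot_combo _ _ _ _ _
    simp only [smul_eq_mul] at hconvineq
    have key : t * (A i ⬝ᵥ x + C i) ≤ t * h x := by nlinarith [hconvineq]
    exact le_of_mul_le_mul_left key ht
  have hJne : J.Nonempty := by
    obtain ⟨i, hiJ, _⟩ := claim2 0
    exact ⟨i, hiJ⟩
  obtain ⟨N, hN⟩ : ∃ N, J.card = N + 1 :=
    ⟨J.card - 1, (Nat.succ_pred_eq_of_pos (Finset.card_pos.mpr hJne)).symm⟩
  set e : {x // x ∈ J} ≃ Fin (N+1) := J.equivFin.trans (finCongr hN) with he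
  refine ⟨N, fun k => A (e.symm k).val, fun k => C (e.symm k).val, fun x => ?_⟩
  apply le_antisymm
  · obtain ⟨i, hiJ, hxi⟩ := claim2 x
    have hval : h x = A i ⬝ᵥ x + C i := haff i x hxi
    have hle := Finset.le_sup'
      (f := fun k : Fin (N+1) => A (e.symm k).val ⬝ᵥ x + C (e.symm k).val)
      (b := e ⟨i, hiJ⟩) (Finset.mem_univ _)
    simp only [Equiv.symm_apply_apply] at hle
    rw [hval]
    exact hle
  · apply Finset.sup'_le
    intro k _
    exact claim1 _ (e.symm k).2 x



lemma gamma_convex {m M : ℕ} (f : (Fin m → ℝ) → ℝ) (P : Fin M → Set (Fin m → ℝ))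
    (hP : ∀ i, IsPolyhedron (P i)) (hcover : (⋃ i, P i) = Set.univ)
    (A : Fin M → Fin m → ℝ) (C : Fin M → ℝ)
    (haff : ∀ i, ∀ x ∈ P i, f x = A i ⬝ᵥ x + C i) :
    ConvexOn ℝ Set.univ (fun x => f x +
      ∑ p : Fin M × Fin M, |(A p.1 ⬝ᵥ x + C p.1) - (A p.2 ⬝ᵥ x + C p.2)|) := by
  refine ⟨convex_univ, ?_⟩
  intro x _ y _ p q hp hq hpq
  have hp' : p = 1 - q := by linarith
  subst hp'
  set ℓ : ℝ → (Fin m → ℝ) := fun t => x + t • (y - x) with hℓ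
  have hℓcont : Continuous ℓ := by
    apply continuous_const.add
    exact continuous_id.smul continuous_const
  have hℓcombo : ∀ (t₁ t₂ a b : ℝ), a + b = 1 →
      ℓ (a * t₁ + b * t₂) = a • ℓ t₁ + b • ℓ t₂ := by
    intro t₁ t₂ a b hab
    have ha : a = 1 - b := by linarith
    subst ha
    simp only [hℓ]
    module
  have hcv := oneD_convex (fun i => ℓ ⁻¹' (P i))
    (fun i => (hP i).isClosed.preimage hℓcont)
    (fun i => by
      intro t₁ ht₁ t₂ ht₂ a b ha hb hab
      simp only [Set.mem_preimage, smul_eq_mul] at *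
      rw [hℓcombo t₁ t₂ a b hab]
      exact (hP i).convex ht₁ ht₂ ha hb hab)
    (by
      ext t
      simp only [Set.mem_iUnion, Set.mem_preimage, Set.mem_univ, iff_true]
      have : ℓ t ∈ ⋃ i, P i := hcover ▸ Set.mem_univ _
      exact Set.mem_iUnion.mp this)
    (fun i => A i ⬝ᵥ (y - x)) (fun i => A i ⬝ᵥ x + C i)
    (fun t => f (ℓ t))
    (by
      intro i t ht
      show f (ℓ t) = A i ⬝ᵥ (y - x) * t + (A i ⬝ᵥ x + C i)
      rw [haff i (ℓ t) ht]
      simp only [hℓ]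
      rw [dotProduct_add, dotProduct_smul]
      simp [smul_eq_mul]; ring)
  -- transfer
  have hψ : ∀ t : ℝ, f (ℓ t) + ∑ pr : Fin M × Fin M,
      |(A pr.1 ⬝ᵥ ℓ t + C pr.1) - (A pr.2 ⬝ᵥ ℓ t + C pr.2)|
      = f (ℓ t) + ∑ pr : Fin M × Fin M,
      |((A pr.1 ⬝ᵥ (y-x)) * t + (A pr.1 ⬝ᵥ x + C pr.1)) - ((A pr.2 ⬝ᵥ (y-x)) * t + (A pr.2 ⬝ᵥ x + C pr.2))| := by
    intro t
    congr 1
    apply Finset.sum_congr rfl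
    intro pr _
    congr 1
    simp only [hℓ]
    rw [dotProduct_add, dotProduct_add, dotProduct_smul, dotProduct_smul]
    simp [smul_eq_mul]; ring
  have hcv2 : ConvexOn ℝ Set.univ (fun t => f (ℓ t) + ∑ pr : Fin M × Fin M,
      |(A pr.1 ⬝ᵥ ℓ t + C pr.1) - (A pr.2 ⬝ᵥ ℓ t + C pr.2)|) := by
    refine ⟨convex_univ, fun t₁ ht₁ t₂ ht₂ a b ha hb hab => ?_⟩
    have := hcv.2 ht₁ ht₂ ha hb hab
    simp only at this ⊢
    rw [hψ (a • t₁ + b • t₂), hψ t₁, hψ t₂]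
    exact this
  have h0 : ℓ 0 = x := by simp [hℓ]
  have h1 : ℓ 1 = y := by simp [hℓ]
  have hq' : ℓ q = (1-q) • x + q • y := by
    have := hℓcombo 0 1 (1-q) q (by ring)
    simp only [mul_zero, mul_one, zero_add] at this
    rw [this, h0, h1]
  have hineq := hcv2.2 (Set.mem_univ (0:ℝ)) (Set.mem_univ (1:ℝ)) hp hq hpq
  have harg : (1-q) • (0:ℝ) + q • (1:ℝ) = q := by simp
  rw [harg] at hineq
  simp only at hineq ⊢
  rw [hq', h0, h1] at hineq
  exact hineq


lemma sum_dotProduct' {m : ℕ} {ι : Type*} (s : Finset ι) (v : ι → Fin m → ℝ)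
    (x : Fin m → ℝ) : (∑ i ∈ s, v i) ⬝ᵥ x = ∑ i ∈ s, v i ⬝ᵥ x := by
  classical
  induction s using Finset.cons_induction with
  | empty => simp
  | cons a s' ha ih => rw [Finset.sum_cons, Finset.sum_cons, add_dotProduct, ih]

/-- Every continuous piecewise affine `f : ℝ^m → ℝ` is the difference `f = γ − η`
of two convex continuous piecewise affine functions, each expressible as the pointwise maximum
of finitely many affine functions. -/
theorem cpwa_eq_diff_of_max_affine (m : ℕ) (f : (Fin m → ℝ) → ℝ) (hf : IsCPWA f) :
    ∃ (N₁ N₂ : ℕ) (a : Fin (N₁ + 1) → Fin m → ℝ) (c : Fin (N₁ + 1) → ℝ)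
      (p : Fin (N₂ + 1) → Fin m → ℝ) (q : Fin (N₂ + 1) → ℝ)
      (γ η : (Fin m → ℝ) → ℝ),
      (∀ x, γ x = Finset.univ.sup' Finset.univ_nonempty (fun i => a i ⬝ᵥ x + c i)) ∧
      (∀ x, η x = Finset.univ.sup' Finset.univ_nonempty (fun i => p i ⬝ᵥ x + q i)) ∧
      ConvexOn ℝ Set.univ γ ∧ ConvexOn ℝ Set.univ η ∧
      IsCPWA γ ∧ IsCPWA η ∧
      (∀ x, f x = γ x - η x) := by
  classical
  obtain ⟨hcont, M, P, hpoly, hcover, haff0⟩ := hf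
  choose A C haff using haff0
  set u : (Fin M × Fin M) → (Fin m → ℝ) → ℝ :=
    fun pr x => (A pr.1 ⬝ᵥ x + C pr.1) - (A pr.2 ⬝ᵥ x + C pr.2) with hu
  set η0 : (Fin m → ℝ) → ℝ := fun x => ∑ pr : Fin M × Fin M, |u pr x| with hη0
  have hucont : ∀ pr, Continuous (u pr) := by
    intro pr
    exact (((dot_cont (A pr.1)).add continuous_const).sub
      ((dot_cont (A pr.2)).add continuous_const))
  have huaff : ∀ pr x, u pr x = (A pr.1 - A pr.2) ⬝ᵥ x + (C pr.1 - C pr.2) := by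
    intro pr x
    simp only [hu, sub_dotProduct]
    ring
  -- convexity of f + η0 and of η0
  have hγconv : ConvexOn ℝ Set.univ (fun x => f x + η0 x) :=
    gamma_convex f P hpoly hcover A C haff
  have hηconv : ConvexOn ℝ Set.univ η0 := by
    apply convexOn_finset_sum convex_univ
    intro pr _
    have : (fun x => |u pr x|) = fun x => |(A pr.1 - A pr.2) ⬝ᵥ x + (C pr.1 - C pr.2)| := by
      funext x
      rw [huaff]
    rw [this]
    exact convexOn_abs_affine_m _ _
  -- sign regions
  set ε : Bool → ℝ := fun b => cond b 1 (-1) with hε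
  set sgn : (Fin M × Fin M → Bool) → Set (Fin m → ℝ) :=
    fun s => {x | ∀ pr, 0 ≤ ε (s pr) * u pr x} with hsgn
  have hsgnclosed : ∀ s, IsClosed (sgn s) := by
    intro s
    have : sgn s = ⋂ pr, {x | 0 ≤ ε (s pr) * u pr x} := by
      ext x
      simp [hsgn]
    rw [this]
    exact isClosed_iInter (fun pr =>
      isClosed_le continuous_const (continuous_const.mul (hucont pr)))
  have hsgnmem : ∀ x, ∃ s, x ∈ sgn s := by
    intro x
    refine ⟨fun pr => decide (0 ≤ u pr x), fun pr => ?_⟩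
    show 0 ≤ ε (decide (0 ≤ u pr x)) * u pr x
    by_cases hd : 0 ≤ u pr x
    · simp [hε, hd]
    · have hdec : (decide (0 ≤ u pr x)) = false := decide_eq_false hd
      rw [hdec]
      simp only [hε, cond_false]
      push_neg at hd
      nlinarith
  have hsgnaff : ∀ s, ∀ x ∈ sgn s, η0 x =
      (∑ pr : Fin M × Fin M, ε (s pr) • (A pr.1 - A pr.2)) ⬝ᵥ x
        + (∑ pr : Fin M × Fin M, ε (s pr) * (C pr.1 - C pr.2)) := by
    intro s x hx
    rw [sum_dotProduct', ← Finset.sum_add_distrib]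
    simp only [hη0]
    apply Finset.sum_congr rfl
    intro pr _
    rw [smul_dotProduct]
    have hterm : ε (s pr) * ((A pr.1 - A pr.2) ⬝ᵥ x) + ε (s pr) * (C pr.1 - C pr.2)
        = ε (s pr) * u pr x := by
      rw [huaff]; ring
    rw [smul_eq_mul, hterm]
    have hsx := hx pr
    cases hb : s pr with
    | true =>
        rw [hb] at hsx
        simp only [hε, cond_true, one_mul] at hsx ⊢
        exact abs_of_nonneg hsx
    | false =>
        rw [hb] at hsx
        simp only [hε, cond_false, neg_one_mul] at hsx ⊢
        rw [abs_of_nonpos (by linarith)]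
  -- representation of γ = f + η0
  obtain ⟨N₁, a, c, hrepγ⟩ := convex_pwa_eq_sup (fun x => f x + η0 x) hγconv
    (fun is : Fin M × (Fin M × Fin M → Bool) => P is.1 ∩ sgn is.2)
    (fun is => ((hpoly is.1).isClosed).inter (hsgnclosed is.2))
    (by
      ext x
      simp only [Set.mem_iUnion, Set.mem_inter_iff, Set.mem_univ, iff_true]
      have : x ∈ ⋃ i, P i := hcover ▸ Set.mem_univ x
      obtain ⟨i, hi⟩ := Set.mem_iUnion.mp this
      obtain ⟨s, hs⟩ := hsgnmem x
      exact ⟨(i, s), hi, hs⟩)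
    (fun is => A is.1 + ∑ pr : Fin M × Fin M, ε (is.2 pr) • (A pr.1 - A pr.2))
    (fun is => C is.1 + ∑ pr : Fin M × Fin M, ε (is.2 pr) * (C pr.1 - C pr.2))
    (by
      rintro ⟨i, s⟩ x ⟨hxP, hxS2⟩
      show f x + η0 x = _
      rw [add_dotProduct, haff i x hxP, hsgnaff s x hxS2]
      ring)
  -- representation of η0
  obtain ⟨N₂, p, q, hrepη⟩ := convex_pwa_eq_sup η0 hηconv sgn hsgnclosed
    (by
      ext x
      simp only [Set.mem_iUnion, Set.mem_univ, iff_true]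
      exact hsgnmem x)
    (fun s => ∑ pr : Fin M × Fin M, ε (s pr) • (A pr.1 - A pr.2))
    (fun s => ∑ pr : Fin M × Fin M, ε (s pr) * (C pr.1 - C pr.2))
    hsgnaff
  refine ⟨N₁, N₂, a, c, p, q,
    (fun x => Finset.univ.sup' Finset.univ_nonempty (fun i => a i ⬝ᵥ x + c i)),
    (fun x => Finset.univ.sup' Finset.univ_nonempty (fun i => p i ⬝ᵥ x + q i)),
    fun x => rfl, fun x => rfl,
    convexOn_sup'_affine a c, convexOn_sup'_affine p q,
    isCPWA_sup'_affine a c, isCPWA_sup'_affine p q, fun x => ?_⟩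
  have e1 := hrepγ x
  have e2 := hrepη x
  beta_reduce
  linarith [e1, e2]
end
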